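/- arXiv:1012.1394 — 6 statements merged into one kernel-verified Lean document; each statement's English description precedes it below -/
import Mathlib

section
/- Let R be a noetherian commutative ring and F : ⋯ → F₂ → F₁ → F₀ → 0 a chain complex (indexed by ℕ) of flat R-modules such that for every prime ideal p of R the complex κ(p) ⊗_R F is acyclic (H_i = 0 for all i > 0). Then for every R-module M the complex M ⊗_R F is acyclic, i.e., H_i(M ⊗_R F) = 0 for all i > 0. -/
open TensorProduct

/-- `κ(p)`: the residue field of the localization of `R` at the prime `p`. -/
noncomputable abbrev kappa {R : Type*} [CommRing R] (p : Ideal R) [p.IsPrime] : Type _ :=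
  IsLocalRing.ResidueField (Localization.AtPrime p)

section Aux

variable {R : Type*} [CommRing R]
variable {F : ℕ → Type*} [∀ n, AddCommGroup (F n)] [∀ n, Module R (F n)]

/-- Auxiliary predicate: `M ⊗[R] F` is acyclic. -/
def IsGood (d : ∀ n : ℕ, F (n + 1) →ₗ[R] F n)
    (M : Type*) [AddCommGroup M] [Module R M] : Prop :=
  ∀ n : ℕ, Function.Exact (LinearMap.lTensor M (d (n + 1))) (LinearMap.lTensor M (d n))

variable {d : ∀ n : ℕ, F (n + 1) →ₗ[R] F n}

/-- Naturality of the differentials of `M ⊗ F` in `M`. -/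
lemma comm_lr {A B : Type*} [AddCommGroup A] [Module R A] [AddCommGroup B] [Module R B]
    (g : A →ₗ[R] B) (n : ℕ) (x : A ⊗[R] F (n + 1)) :
    LinearMap.lTensor B (d n) (LinearMap.rTensor (F (n + 1)) g x)
      = LinearMap.rTensor (F n) g (LinearMap.lTensor A (d n) x) := by
  rw [← LinearMap.comp_apply, ← LinearMap.comp_apply,
    LinearMap.lTensor_comp_rTensor, LinearMap.rTensor_comp_lTensor]

lemma dd_zero (hcomplex : ∀ n : ℕ, (d n).comp (d (n + 1)) = 0)
    (M : Type*) [AddCommGroup M] [Module R M] (n : ℕ) (x : M ⊗[R] F (n + 2)) :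
    LinearMap.lTensor M (d n) (LinearMap.lTensor M (d (n + 1)) x) = 0 := by
  rw [← LinearMap.comp_apply, ← LinearMap.lTensor_comp, hcomplex n,
    LinearMap.lTensor_zero, LinearMap.zero_apply]

lemma exact_of_aux {A B C : Type*} [AddCommGroup A] [Module R A] [AddCommGroup B] [Module R B]
    [AddCommGroup C] [Module R C] {f : A →ₗ[R] B} {g : B →ₗ[R] C}
    (h0 : ∀ x, g (f x) = 0) (h1 : ∀ x, g x = 0 → ∃ y, f y = x) :
    Function.Exact f g := by
  intro x
  constructor
  · exact h1 x
  · rintro ⟨y, rfl⟩; exact h0 y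

lemma isGood_of_subsingleton (M : Type*) [AddCommGroup M] [Module R M] [Subsingleton M] :
    IsGood d M := by
  have hz : ∀ (k : ℕ) (x : M ⊗[R] F k), x = 0 := by
    intro k x
    induction x with
    | zero => rfl
    | tmul m f => rw [Subsingleton.elim m 0, TensorProduct.zero_tmul]
    | add a b ha hb => rw [ha, hb, add_zero]
  intro n
  refine exact_of_aux (fun x => hz _ _) (fun x _ => ⟨0, ?_⟩)
  rw [map_zero, hz _ x]

/-- The key two-out-of-three property for short exact sequences. -/
lemma isGood_of_ses [∀ n, Module.Flat R (F n)]
    (hcomplex : ∀ n : ℕ, (d n).comp (d (n + 1)) = 0)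
    {A B C : Type*} [AddCommGroup A] [Module R A] [AddCommGroup B] [Module R B]
    [AddCommGroup C] [Module R C] (ι : A →ₗ[R] B) (π : B →ₗ[R] C)
    (hι : Function.Injective ι) (hπ : Function.Surjective π)
    (hexact : Function.Exact ι π)
    (hA : IsGood d A) (hC : IsGood d C) : IsGood d B := by
  intro n
  refine exact_of_aux (dd_zero hcomplex B n) ?_
  intro b hb
  -- push to C
  have hc : LinearMap.lTensor C (d n) (LinearMap.rTensor (F (n + 1)) π b) = 0 := by
    rw [comm_lr, hb, map_zero]
  obtain ⟨c', hc'⟩ := (hC n _).mp hc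
  obtain ⟨b', rfl⟩ := LinearMap.rTensor_surjective (F (n + 2)) hπ c'
  -- b - d b' comes from A
  have hmem : LinearMap.rTensor (F (n + 1)) π (b - LinearMap.lTensor B (d (n + 1)) b') = 0 := by
    rw [map_sub, ← comm_lr, hc', sub_self]
  obtain ⟨a, ha⟩ := (rTensor_exact (F (n + 1)) hexact hπ _).mp hmem
  -- a is a cycle
  have hda : LinearMap.lTensor A (d n) a = 0 := by
    apply Module.Flat.rTensor_preserves_injective_linearMap (M := F n) ι hι
    rw [map_zero, ← comm_lr, ha, map_sub, hb, dd_zero hcomplex, sub_zero]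
  obtain ⟨a', ha'⟩ := (hA n a).mp hda
  refine ⟨b' + LinearMap.rTensor (F (n + 2)) ι a', ?_⟩
  rw [map_add, comm_lr, ha', ha]
  abel

lemma isGood_congr [∀ n, Module.Flat R (F n)]
    (hcomplex : ∀ n : ℕ, (d n).comp (d (n + 1)) = 0)
    {A B : Type*} [AddCommGroup A] [Module R A] [AddCommGroup B] [Module R B]
    (e : A ≃ₗ[R] B) (hA : IsGood d A) : IsGood d B := by
  refine isGood_of_ses hcomplex e.toLinearMap (0 : B →ₗ[R] PUnit.{1}) e.injective ?_ ?_ hA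
      (isGood_of_subsingleton _)
  · intro x; exact ⟨0, Subsingleton.elim _ _⟩
  · intro x
    simp only [LinearMap.zero_apply, LinearEquiv.coe_coe, true_iff]
    exact ⟨e.symm x, e.apply_symm_apply x⟩

/-- Every element of `M ⊗ N` comes from a finitely generated submodule of `M`. -/
lemma exists_fg_rTensor {M N : Type*} [AddCommGroup M] [Module R M]
    [AddCommGroup N] [Module R N] (x : M ⊗[R] N) :
    ∃ M₀ : Submodule R M, M₀.FG ∧ x ∈ Set.range (LinearMap.rTensor N M₀.subtype) := by
  induction x with
  | zero => exact ⟨⊥, Submodule.fg_bot, 0, map_zero _⟩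
  | tmul m f =>
      exact ⟨R ∙ m, Submodule.fg_span_singleton m,
        ⟨m, Submodule.mem_span_singleton_self m⟩ ⊗ₜ f, rfl⟩
  | add a b ha hb =>
      obtain ⟨M₁, h₁, y₁, hy₁⟩ := ha
      obtain ⟨M₂, h₂, y₂, hy₂⟩ := hb
      refine ⟨M₁ ⊔ M₂, h₁.sup h₂,
        LinearMap.rTensor N (Submodule.inclusion (le_sup_left : M₁ ≤ M₁ ⊔ M₂)) y₁ +
          LinearMap.rTensor N (Submodule.inclusion (le_sup_right : M₂ ≤ M₁ ⊔ M₂)) y₂, ?_⟩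
      rw [map_add, ← LinearMap.rTensor_comp_apply, ← LinearMap.rTensor_comp_apply,
        Submodule.subtype_comp_inclusion, Submodule.subtype_comp_inclusion, hy₁, hy₂]

/-- Dévissage: a finitely generated module is good provided `R ⧸ q` is good for all primes
`q` containing the annihilator. -/
lemma isGood_of_fg [IsNoetherianRing R] [∀ n, Module.Flat R (F n)]
    (hcomplex : ∀ n : ℕ, (d n).comp (d (n + 1)) = 0)
    {M : Type*} [AddCommGroup M] [Module R M] [Module.Finite R M]
    (hq : ∀ q : Ideal R, q.IsPrime → (⊤ : Submodule R M).annihilator ≤ q →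
      IsGood d (R ⧸ q)) :
    IsGood d M := by
  have : IsNoetherian R M := isNoetherian_of_isNoetherianRing_of_finite R M
  have hmax := (set_has_maximal_iff_noetherian (R := R) (M := M)).mpr this
  obtain ⟨N, hN, hNmax⟩ := hmax {N : Submodule R M | IsGood d ↥N}
    ⟨⊥, isGood_of_subsingleton _⟩
  rcases eq_or_ne N ⊤ with rfl | hne
  · exact isGood_congr hcomplex Submodule.topEquiv hN
  exfalso
  have hlt : N < ⊤ := lt_top_iff_ne_top.mpr hne
  have : Nontrivial (M ⧸ N) := Submodule.Quotient.nontrivial_iff.mpr hlt.ne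
  obtain ⟨q, hqa⟩ := associatedPrimes.nonempty R (M ⧸ N)
  obtain ⟨hq_prime, x, hx⟩ := isAssociatedPrime_iff.mp hqa
  have hx0 : x ≠ 0 := by
    rintro rfl
    exact hq_prime.ne_top (hx.trans (by ext r; simp [Submodule.mem_colon_singleton]))
  -- q contains the annihilator of M
  have hqle : (⊤ : Submodule R M).annihilator ≤ q := by
    intro r hr
    rw [hx, Submodule.mem_colon_singleton, Submodule.mem_bot]
    obtain ⟨m, rfl⟩ := Submodule.Quotient.mk_surjective N x
    rw [← Submodule.Quotient.mk_smul, Submodule.mem_annihilator.mp hr m trivial]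
    rfl
  -- the bigger submodule
  set f : M →ₗ[R] M ⧸ N := N.mkQ with hf
  set N' : Submodule R M := Submodule.comap f (R ∙ x) with hN'
  have hNN' : N ≤ N' := by
    intro m hm
    have : f m = 0 := (Submodule.Quotient.mk_eq_zero N).mpr hm
    simp only [hN', Submodule.mem_comap, this]
    exact Submodule.zero_mem _
  have hlt' : N < N' := by
    refine lt_of_le_of_ne hNN' fun h => hx0 ?_
    obtain ⟨m, rfl⟩ := Submodule.Quotient.mk_surjective N x
    have hm : m ∈ N' := by
      simp only [hN', Submodule.mem_comap]
      exact Submodule.mem_span_singleton_self _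
    rw [← h] at hm
    exact (Submodule.Quotient.mk_eq_zero N).mpr hm
  -- short exact sequence  N ↪ N' ↠ N'⧸N  with quotient ≅ R⧸q
  set A : Submodule R ↥N' := Submodule.comap N'.subtype N with hA
  have hGA : IsGood d ↥A :=
    isGood_congr hcomplex (Submodule.comapSubtypeEquivOfLe hNN').symm hN
  set g : ↥N' →ₗ[R] M ⧸ N := f.comp N'.subtype with hg
  have hker : LinearMap.ker g = A := by
    ext y
    simp only [hg, hA, LinearMap.mem_ker, LinearMap.comp_apply, Submodule.mem_comap]
    exact Submodule.Quotient.mk_eq_zero N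
  have hrange : LinearMap.range g = R ∙ x := by
    rw [hg, LinearMap.range_comp, Submodule.range_subtype, hN',
      Submodule.map_comap_eq, Submodule.range_mkQ, top_inf_eq]
  have htor : Ideal.torsionOf R (M ⧸ N) x = q := by
    ext r
    rw [Ideal.mem_torsionOf_iff, hx, Submodule.mem_colon_singleton, Submodule.mem_bot]
  -- assemble the equivalence (R ⧸ q) ≃ₗ (↥N' ⧸ A)
  have e1 : (R ⧸ q) ≃ₗ[R] ↥(R ∙ x) := htor ▸ Ideal.quotTorsionOfEquivSpanSingleton R (M ⧸ N) x
  have e2 : ↥(R ∙ x) ≃ₗ[R] ↥(LinearMap.range g) := LinearEquiv.ofEq _ _ hrange.symm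
  have e3 : (↥N' ⧸ A) ≃ₗ[R] ↥(LinearMap.range g) :=
    (Submodule.quotEquivOfEq A (LinearMap.ker g) hker.symm).trans g.quotKerEquivRange
  have hGC : IsGood d (↥N' ⧸ A) :=
    isGood_congr hcomplex (e1.trans (e2.trans e3.symm)) (hq q hq_prime hqle)
  have hGN' : IsGood d ↥N' :=
    isGood_of_ses hcomplex A.subtype A.mkQ (Submodule.injective_subtype A)
      (Submodule.mkQ_surjective A) (LinearMap.exact_subtype_mkQ A) hGA hGC
  exact hNmax N' hGN' hlt'

end Aux

set_option maxHeartbeats 1000000 in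
/-- Let `R` be a noetherian commutative ring and
`F : ⋯ → F₂ → F₁ → F₀ → 0` a chain complex (indexed by `ℕ`) of flat `R`-modules such
that `κ(p) ⊗[R] F` is acyclic (exact at every spot `F (n+1)`) for every prime ideal
`p`.  Then for every `R`-module `M` the complex `M ⊗[R] F` is acyclic, i.e. exact at
every spot `F (n+1)`. -/
theorem stmt_1 (R : Type*) [CommRing R] [IsNoetherianRing R]
    (F : ℕ → Type*) [∀ n, AddCommGroup (F n)] [∀ n, Module R (F n)]
    [∀ n, Module.Flat R (F n)]
    (d : ∀ n : ℕ, F (n + 1) →ₗ[R] F n)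
    (hcomplex : ∀ n : ℕ, (d n).comp (d (n + 1)) = 0)
    (hacyclic : ∀ (p : Ideal R) [p.IsPrime], ∀ n : ℕ,
      Function.Exact (LinearMap.lTensor (kappa p) (d (n + 1)))
        (LinearMap.lTensor (kappa p) (d n))) :
    ∀ (M : Type*) [AddCommGroup M] [Module R M], ∀ n : ℕ,
      Function.Exact (LinearMap.lTensor M (d (n + 1))) (LinearMap.lTensor M (d n)) := by
  -- Main step: `R ⧸ p` is good for every prime `p`, by noetherian induction on `p`.
  have key : ∀ p : Ideal R, p.IsPrime → IsGood d (R ⧸ p) := by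
    have wf : WellFounded ((· > ·) : Ideal R → Ideal R → Prop) := IsWellFounded.wf
    intro p
    induction p using wf.induction with
    | _ p IH =>
      intro hp
      haveI : p.IsPrime := hp
      -- the `R`-linear embedding of `R ⧸ p` into `κ(p)`
      have halg : ∀ r : R, algebraMap R (kappa p) r
          = IsLocalRing.residue _ (algebraMap R (Localization.AtPrime p) r) :=
        fun r => IsScalarTower.algebraMap_apply R _ _ r
      have hzero : ∀ r : R, algebraMap R (kappa p) r = 0 ↔ r ∈ p := by
        intro r
        rw [halg]
        rw [IsLocalRing.residue_eq_zero_iff,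
          IsLocalization.AtPrime.to_map_mem_maximal_iff (Localization.AtPrime p) p]
      have hple : (p : Submodule R R) ≤ LinearMap.ker (Algebra.linearMap R (kappa p)) := by
        intro r hr
        simpa [LinearMap.mem_ker] using (hzero r).mpr hr
      set g : (R ⧸ p) →ₗ[R] kappa p := Submodule.liftQ p (Algebra.linearMap R (kappa p)) hple
        with hgdef
      have hgmk : ∀ r : R, g (Submodule.Quotient.mk r) = algebraMap R (kappa p) r :=
        fun r => rfl
      have hginj : Function.Injective g := by
        intro a b hab
        obtain ⟨a, rfl⟩ := Submodule.Quotient.mk_surjective p a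
        obtain ⟨b, rfl⟩ := Submodule.Quotient.mk_surjective p b
        rw [Submodule.Quotient.eq]
        have h0 : algebraMap R (kappa p) (a - b) = 0 := by
          rw [map_sub, ← hgmk, ← hgmk, hab, sub_self]
        exact (hzero _).mp h0
      -- clearing denominators
      have keyA : ∀ (i : ℕ) (z : kappa p ⊗[R] F i), ∃ s : p.primeCompl,
          ∃ w : (R ⧸ p) ⊗[R] F i, (s : R) • z = LinearMap.rTensor (F i) g w := by
        intro i z
        induction z with
        | zero => exact ⟨1, 0, by simp⟩
        | tmul k f =>
            obtain ⟨l, rfl⟩ := IsLocalRing.residue_surjective k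
            obtain ⟨⟨r, s⟩, hrs⟩ := IsLocalization.surj p.primeCompl l
            refine ⟨s, Submodule.Quotient.mk r ⊗ₜ f, ?_⟩
            rw [TensorProduct.smul_tmul', LinearMap.rTensor_tmul, hgmk]
            congr 1
            rw [Algebra.smul_def, halg, ← map_mul,
              mul_comm (algebraMap R (Localization.AtPrime p) (s : R)) l, hrs, ← halg]
        | add z₁ z₂ h₁ h₂ =>
            obtain ⟨s₁, w₁, hw₁⟩ := h₁
            obtain ⟨s₂, w₂, hw₂⟩ := h₂
            refine ⟨s₁ * s₂, (s₂ : R) • w₁ + (s₁ : R) • w₂, ?_⟩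
            rw [map_add, map_smul, map_smul, ← hw₁, ← hw₂, Submonoid.coe_mul, smul_add]
            congr 1
            · rw [mul_comm, mul_smul]
            · rw [mul_smul]
      have hφinj : ∀ i : ℕ, Function.Injective (LinearMap.rTensor (F i) g) := fun i =>
        Module.Flat.rTensor_preserves_injective_linearMap g hginj
      -- exactness at spot n + 1
      intro n
      refine exact_of_aux (dd_zero hcomplex _ n) ?_
      intro x hx
      have hxK : LinearMap.lTensor (kappa p) (d n)
          (LinearMap.rTensor (F (n + 1)) g x) = 0 := by
        rw [comm_lr, hx, map_zero]
      obtain ⟨z, hz⟩ := (hacyclic p n _).mp hxK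
      obtain ⟨s, w, hw⟩ := keyA (n + 2) z
      have hsx : (s : R) • x = LinearMap.lTensor (R ⧸ p) (d (n + 1)) w := by
        apply hφinj (n + 1)
        rw [map_smul, ← hz, ← map_smul, hw, comm_lr]
      -- multiplication by s and the quotient by its image
      set μ : (R ⧸ p) →ₗ[R] (R ⧸ p) := (s : R) • LinearMap.id with hμdef
      have hμapp : ∀ y : R ⧸ p, μ y = (s : R) • y := fun y => rfl
      have hμinj : Function.Injective μ := by
        intro a b hab
        obtain ⟨a, rfl⟩ := Submodule.Quotient.mk_surjective p a
        obtain ⟨b, rfl⟩ := Submodule.Quotient.mk_surjective p b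
        rw [hμapp, hμapp, ← Submodule.Quotient.mk_smul, ← Submodule.Quotient.mk_smul] at hab
        rw [Submodule.Quotient.eq] at hab ⊢
        have hmul : (s : R) * (a - b) ∈ p := by
          simpa [smul_eq_mul, mul_sub] using hab
        rcases hp.mem_or_mem hmul with h | h
        · exact absurd h s.2
        · exact h
      set π : (R ⧸ p) →ₗ[R] ((R ⧸ p) ⧸ LinearMap.range μ) := (LinearMap.range μ).mkQ
        with hπdef
      have hπsurj : Function.Surjective π := Submodule.mkQ_surjective _
      have hexactμπ : Function.Exact μ π := LinearMap.exact_map_mkQ_range μ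
      have hπμ : π ∘ₗ μ = 0 :=
        LinearMap.ext fun y => (hexactμπ (μ y)).mpr ⟨y, rfl⟩
      -- the quotient is good
      have hGY : IsGood d ((R ⧸ p) ⧸ LinearMap.range μ) := by
        haveI : Module.Finite R ((R ⧸ p) ⧸ LinearMap.range μ) := by
          have hs : Function.Surjective (π.comp p.mkQ) :=
            hπsurj.comp (Submodule.mkQ_surjective (p : Submodule R R))
          exact Module.Finite.of_surjective _ hs
        refine isGood_of_fg hcomplex ?_
        intro q hq_prime hq_ann
        refine IH q ?_ hq_prime
        have hpq : p ≤ q := by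
          intro r hr
          apply hq_ann
          rw [Submodule.mem_annihilator]
          intro y _
          obtain ⟨y, rfl⟩ := hπsurj y
          obtain ⟨a, rfl⟩ := Submodule.Quotient.mk_surjective p y
          have hra : (r • a : R) ∈ p := by
            simpa [smul_eq_mul] using p.mul_mem_right a hr
          rw [← map_smul, ← Submodule.Quotient.mk_smul,
            (Submodule.Quotient.mk_eq_zero (p : Submodule R R)).mpr hra, map_zero]
        have hsq : (s : R) ∈ q := by
          apply hq_ann
          rw [Submodule.mem_annihilator]
          intro y _
          obtain ⟨y, rfl⟩ := hπsurj y
          rw [← map_smul, ← hμapp]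
          exact (hexactμπ (μ y)).mpr ⟨y, rfl⟩
        exact lt_of_le_of_ne hpq fun h => s.2 (h ▸ hsq)
      -- action of `μ` on tensors is scalar multiplication by `s`
      have hμten : ∀ (k : ℕ) (u : (R ⧸ p) ⊗[R] F k),
          LinearMap.rTensor (F k) μ u = (s : R) • u := by
        intro k u
        induction u with
        | zero => simp
        | tmul a f => rw [LinearMap.rTensor_tmul, hμapp, TensorProduct.smul_tmul']
        | add u₁ u₂ h₁ h₂ => rw [map_add, h₁, h₂, smul_add]
      -- the diagram chase
      have h3 : LinearMap.lTensor _ (d (n + 1)) (LinearMap.rTensor (F (n + 2)) π w) = 0 := by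
        rw [comm_lr, ← hsx, ← hμten, ← LinearMap.rTensor_comp_apply, hπμ,
          LinearMap.rTensor_zero, LinearMap.zero_apply]
      obtain ⟨v', hv'⟩ := (hGY (n + 1) _).mp h3
      obtain ⟨v, rfl⟩ := LinearMap.rTensor_surjective (F (n + 3)) hπsurj v'
      have h4 : LinearMap.rTensor (F (n + 2)) π
          (w - LinearMap.lTensor _ (d (n + 2)) v) = 0 := by
        rw [map_sub, ← comm_lr, hv', sub_self]
      obtain ⟨u, hu⟩ := (rTensor_exact (F (n + 2)) hexactμπ hπsurj _).mp h4
      have h5 : LinearMap.rTensor (F (n + 1)) μ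
          (x - LinearMap.lTensor _ (d (n + 1)) u) = 0 := by
        rw [map_sub, hμten, hμten, hsx, ← map_smul, ← hμten, hu, map_sub,
          dd_zero hcomplex, sub_zero, sub_self]
      have h6 : x - LinearMap.lTensor _ (d (n + 1)) u = 0 :=
        Module.Flat.rTensor_preserves_injective_linearMap μ hμinj (by rw [h5, map_zero])
      exact ⟨u, (sub_eq_zero.mp h6).symm⟩
  -- now every finitely generated module is good, hence every module is
  intro M _ _ n
  refine exact_of_aux (dd_zero hcomplex M n) ?_
  intro x hx
  obtain ⟨M₀, hfg, x₀, hx₀⟩ := exists_fg_rTensor x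
  haveI : Module.Finite R ↥M₀ := Module.Finite.iff_fg.mpr hfg
  have hGM₀ : IsGood d ↥M₀ :=
    isGood_of_fg hcomplex (fun q hq _ => key q hq)
  have hdx₀ : LinearMap.lTensor ↥M₀ (d n) x₀ = 0 := by
    apply Module.Flat.rTensor_preserves_injective_linearMap (M := F n) M₀.subtype
      (Submodule.injective_subtype M₀)
    rw [map_zero, ← comm_lr, hx₀, hx]
  obtain ⟨y₀, hy₀⟩ := (hGM₀ n x₀).mp hdx₀
  refine ⟨LinearMap.rTensor (F (n + 2)) M₀.subtype y₀, ?_⟩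
  rw [comm_lr, hy₀, hx₀]
end

section
/- Let R be a noetherian commutative ring and F : ⋯ → F_{n+1} → F_n → F_{n-1} → ⋯ a (possibly unbounded) ℤ-indexed chain complex of flat R-modules. If κ(p) ⊗_R F is exact for every prime ideal p of R, then F is exact. -/
open TensorProduct

section Aux

variable {R : Type*} [CommRing R]

open LinearMap

lemma aux_smul_rTensor {A M : Type*} [AddCommGroup A] [Module R A]
    [AddCommGroup M] [Module R M] (s : R) (z : A ⊗[R] M) :
    (LinearMap.lsmul R A s).rTensor M z = s • z := by
  induction z with
  | zero => simp
  | tmul a m => simp [TensorProduct.smul_tmul', lsmul_apply, rTensor_tmul]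
  | add x y hx hy => rw [map_add, hx, hy, smul_add]

lemma aux_smul_tensor_zero {A M : Type*} [AddCommGroup A] [Module R A]
    [AddCommGroup M] [Module R M] (s : R) (h : ∀ a : A, s • a = 0) (z : A ⊗[R] M) :
    s • z = 0 := by
  induction z with
  | zero => simp
  | tmul a m => rw [TensorProduct.smul_tmul', h a, TensorProduct.zero_tmul]
  | add x y hx hy => rw [smul_add, hx, hy, add_zero]

variable (p : Ideal R) [p.IsPrime]

lemma aux_ker_linearMap_kappa : LinearMap.ker (Algebra.linearMap R (kappa p)) = p := by
  ext r
  simp only [LinearMap.mem_ker, Algebra.linearMap_apply]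
  rw [IsScalarTower.algebraMap_apply R (Localization.AtPrime p) (kappa p),
    IsLocalRing.ResidueField.algebraMap_eq]
  exact Ideal.Quotient.eq_zero_iff_mem.trans
    (IsLocalization.AtPrime.to_map_mem_maximal_iff (Localization.AtPrime p) p r)

/-- The natural `R`-linear map `R⧸p → κ(p)`. -/
noncomputable def auxPsi : (R ⧸ p) →ₗ[R] kappa p :=
  Submodule.liftQ p (Algebra.linearMap R (kappa p)) (aux_ker_linearMap_kappa p).ge

lemma auxPsi_mk (r : R) : auxPsi p (Submodule.Quotient.mk r) = algebraMap R (kappa p) r := rfl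

lemma auxPsi_injective : Function.Injective (auxPsi p) := by
  rw [← LinearMap.ker_eq_bot, auxPsi,
    Submodule.ker_liftQ_eq_bot p _ _ (aux_ker_linearMap_kappa p).le]

lemma auxPsi_surj (y : kappa p) :
    ∃ s : R, s ∈ p.primeCompl ∧ ∃ r : R ⧸ p, s • y = auxPsi p r := by
  obtain ⟨u, rfl⟩ := Submodule.Quotient.mk_surjective _ y
  obtain ⟨⟨r, s⟩, hrs⟩ := IsLocalization.surj (M := p.primeCompl) u
  refine ⟨(s : R), s.2, Submodule.Quotient.mk r, ?_⟩
  have h1 : (s : R) • (Submodule.Quotient.mk u : kappa p) =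
      Submodule.Quotient.mk (algebraMap R (Localization.AtPrime p) (s : R) * u) := by
    rw [← algebraMap_smul (Localization.AtPrime p) (s : R), ← Submodule.Quotient.mk_smul,
      smul_eq_mul]
  refine h1.trans ?_
  rw [mul_comm, hrs, auxPsi_mk,
    IsScalarTower.algebraMap_apply R (Localization.AtPrime p) (kappa p),
    IsLocalRing.ResidueField.algebraMap_eq]
  rfl

lemma auxPhi_smul_surj (N : Type*) [AddCommGroup N] [Module R N]
    (y : kappa p ⊗[R] N) :
    ∃ s : R, s ∈ p.primeCompl ∧ ∃ z : (R ⧸ p) ⊗[R] N, (auxPsi p).rTensor N z = s • y := by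
  induction y with
  | zero => exact ⟨1, (1 : p.primeCompl).2, 0, by simp⟩
  | tmul k f =>
    obtain ⟨s, hs, r, hr⟩ := auxPsi_surj p k
    exact ⟨s, hs, r ⊗ₜ f, by rw [rTensor_tmul, ← hr, TensorProduct.smul_tmul']⟩
  | add x y hx hy =>
    obtain ⟨s₁, hs₁, z₁, hz₁⟩ := hx
    obtain ⟨s₂, hs₂, z₂, hz₂⟩ := hy
    refine ⟨s₁ * s₂, Submonoid.mul_mem _ hs₁ hs₂, s₂ • z₁ + s₁ • z₂, ?_⟩
    rw [map_add, map_smul, map_smul, hz₁, hz₂, smul_add]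
    rw [smul_smul, smul_smul, mul_comm s₂ s₁]

end Aux

section Main

open LinearMap

variable {R : Type*} [CommRing R]

/-- A baby form of exactness constructor. -/
lemma aux_exact_of {M₁ M₂ M₃ : Type*} [AddCommGroup M₁] [AddCommGroup M₂] [AddCommGroup M₃]
    [Module R M₁] [Module R M₂] [Module R M₃]
    {f : M₁ →ₗ[R] M₂} {g : M₂ →ₗ[R] M₃}
    (hc : ∀ x, g (f x) = 0) (h : ∀ y, g y = 0 → ∃ x, f x = y) :
    Function.Exact f g := by
  intro y
  constructor
  · exact fun hy => h y hy
  · rintro ⟨x, rfl⟩; exact hc x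

theorem aux_quot_exact (R : Type*) [CommRing R] [IsNoetherianRing R]
    (F : ℤ → Type*) [∀ n, AddCommGroup (F n)] [∀ n, Module R (F n)]
    [∀ n, Module.Flat R (F n)]
    (d : ∀ n : ℤ, F (n + 1) →ₗ[R] F n)
    (hcomplex : ∀ n : ℤ, (d n).comp (d (n + 1)) = 0)
    (hexact : ∀ (p : Ideal R) [p.IsPrime], ∀ n : ℤ,
      Function.Exact (LinearMap.lTensor (kappa p) (d (n + 1)))
        (LinearMap.lTensor (kappa p) (d n)))
    (I : Ideal R) : ∀ n : ℤ,
    Function.Exact (LinearMap.lTensor (R ⧸ I) (d (n + 1))) (LinearMap.lTensor (R ⧸ I) (d n)) := by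
  have hzero : ∀ (A : Type _) (_ : AddCommGroup A), ∀ (_ : Module R A), ∀ (m : ℤ)
      (x : A ⊗[R] F (m + 1 + 1)),
      lTensor A (d m) (lTensor A (d (m + 1)) x) = 0 := by
    intro A _ _ m x
    rw [← LinearMap.comp_apply, ← lTensor_comp, hcomplex, lTensor_zero, LinearMap.zero_apply]
  induction I using IsNoetherian.induction with
  | _ I IH =>
  intro n
  refine aux_exact_of (fun x => hzero _ _ _ n x) (fun x hx => ?_)
  by_cases hItop : I = ⊤
  · subst hItop
    have hss : Subsingleton (R ⧸ (⊤ : Ideal R)) :=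
      Submodule.Quotient.subsingleton_iff.mpr rfl
    have h0 : ∀ z : (R ⧸ (⊤ : Ideal R)) ⊗[R] F (n + 1), z = 0 := by
      intro z
      induction z with
      | zero => rfl
      | tmul a m => rw [Subsingleton.elim a 0, TensorProduct.zero_tmul]
      | add x y hx hy => rw [hx, hy, add_zero]
    exact ⟨0, by rw [map_zero, h0 x]⟩
  by_cases hP : Ideal.IsPrime I
  · -- the prime case
    haveI := hP
    -- Step 1: torsion
    obtain ⟨s, hs, y, hy⟩ : ∃ s, s ∈ Ideal.primeCompl I ∧
        ∃ y, lTensor (R ⧸ I) (d (n + 1)) y = s • x := by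
      have h1 : lTensor (kappa I) (d n) ((auxPsi I).rTensor (F (n + 1)) x) = 0 := by
        rw [← LinearMap.comp_apply, lTensor_comp_rTensor, ← rTensor_comp_lTensor,
          LinearMap.comp_apply, hx, map_zero]
      obtain ⟨y', hy'⟩ := (hexact I n _).mp h1
      obtain ⟨s, hs, z, hz⟩ := auxPhi_smul_surj I (F (n + 1 + 1)) y'
      refine ⟨s, hs, z, ?_⟩
      apply Module.Flat.rTensor_preserves_injective_linearMap (auxPsi I) (auxPsi_injective I)
      rw [← LinearMap.comp_apply, rTensor_comp_lTensor, ← lTensor_comp_rTensor,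
        LinearMap.comp_apply, hz, map_smul, hy', map_smul]
    -- Step 2: pass to the quotient by J = I + (s)
    set J : Ideal R := I ⊔ Ideal.span {s} with hJdef
    have hsJ : s ∈ J := Submodule.mem_sup_right (Ideal.mem_span_singleton_self s)
    have hJI : J > I := lt_of_le_of_ne le_sup_left (fun h => hs (h ▸ hsJ))
    set q : (R ⧸ I) →ₗ[R] (R ⧸ J) :=
      Submodule.liftQ I (J.mkQ) (by rw [Submodule.ker_mkQ]; exact le_of_lt hJI) with hqdef
    have hq_mk : ∀ r : R, q (Submodule.Quotient.mk r) = Submodule.Quotient.mk r := fun r => rfl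
    have hq_surj : Function.Surjective q := by
      intro z
      obtain ⟨w, rfl⟩ := Submodule.Quotient.mk_surjective J z
      exact ⟨Submodule.Quotient.mk w, rfl⟩
    have hsmulJ : ∀ a : R ⧸ J, s • a = 0 := by
      intro a
      obtain ⟨w, rfl⟩ := Submodule.Quotient.mk_surjective J a
      show s • Submodule.Quotient.mk w = _
      rw [← Submodule.Quotient.mk_smul]
      exact (Submodule.Quotient.mk_eq_zero _).mpr (by rw [smul_eq_mul]; exact Ideal.mul_mem_right _ J hsJ)
    have hexact_sq : Function.Exact (LinearMap.lsmul R (R ⧸ I) s) q := by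
      intro z
      obtain ⟨w, rfl⟩ := Submodule.Quotient.mk_surjective I z
      constructor
      · intro h0
        have hw : w ∈ J := by
          have := (Submodule.Quotient.mk_eq_zero J).mp (by rw [← hq_mk w]; exact h0)
          exact this
        rw [hJdef] at hw
        obtain ⟨i, hi, c, hc, rfl⟩ := Submodule.mem_sup.mp hw
        obtain ⟨t, rfl⟩ := Ideal.mem_span_singleton'.mp hc
        refine ⟨Submodule.Quotient.mk t, ?_⟩
        show s • (Submodule.Quotient.mk t : R ⧸ I) = Submodule.Quotient.mk (i + t * s)
        rw [← Submodule.Quotient.mk_smul]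
        exact (Submodule.Quotient.eq I).mpr
          (by rw [smul_eq_mul, show s * t - (i + t * s) = -i from by ring]; exact I.neg_mem hi)
      · rintro ⟨z', hz'⟩
        rw [← hz']
        obtain ⟨u, rfl⟩ := Submodule.Quotient.mk_surjective I z'
        show q (s • Submodule.Quotient.mk u) = 0
        rw [← Submodule.Quotient.mk_smul, hq_mk]
        exact (Submodule.Quotient.mk_eq_zero _).mpr (by rw [smul_eq_mul]; exact Ideal.mul_mem_right _ J hsJ)
    have hsinj : Function.Injective ((LinearMap.lsmul R (R ⧸ I) s).rTensor (F (n + 1))) := by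
      apply Module.Flat.rTensor_preserves_injective_linearMap
      intro u v huv
      have key : ∀ z : R ⧸ I, s • z = 0 → z = 0 := by
        intro z hz
        obtain ⟨w, rfl⟩ := Submodule.Quotient.mk_surjective I z
        rw [show s • (Submodule.Quotient.mk w : R ⧸ I) = Submodule.Quotient.mk (s • w) from
          (Submodule.Quotient.mk_smul I s w).symm, Submodule.Quotient.mk_eq_zero] at hz
        rw [Submodule.Quotient.mk_eq_zero]
        rcases hP.mem_or_mem (by rwa [← smul_eq_mul]) with h | h
        · exact absurd h hs
        · exact h
      have := key (u - v) (by rw [smul_sub, sub_eq_zero]; exact huv)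
      exact sub_eq_zero.mp this
    -- Step 3: chase
    have h2 : lTensor (R ⧸ J) (d (n + 1)) (q.rTensor (F (n + 1 + 1)) y) = 0 := by
      rw [← LinearMap.comp_apply, lTensor_comp_rTensor, ← rTensor_comp_lTensor,
        LinearMap.comp_apply, hy, map_smul, aux_smul_tensor_zero s hsmulJ]
    obtain ⟨c, hc⟩ := (IH J hJI (n + 1) _).mp h2
    obtain ⟨b, rfl⟩ := rTensor_surjective (F (n + 1 + 1 + 1)) hq_surj c
    have h3 : q.rTensor (F (n + 1 + 1)) (y - lTensor (R ⧸ I) (d (n + 1 + 1)) b) = 0 := by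
      rw [map_sub, ← LinearMap.comp_apply, rTensor_comp_lTensor, ← lTensor_comp_rTensor,
        LinearMap.comp_apply, hc, sub_self]
    obtain ⟨w, hw⟩ := (rTensor_exact (F (n + 1 + 1)) hexact_sq hq_surj _).mp h3
    refine ⟨w, hsinj ?_⟩
    rw [← LinearMap.comp_apply, rTensor_comp_lTensor, ← lTensor_comp_rTensor,
      LinearMap.comp_apply, hw, map_sub, hy, hzero _ _ _ (n + 1) b, sub_zero, aux_smul_rTensor]
  · -- the non-prime, non-top case
    rw [Ideal.isPrime_iff, not_and_or] at hP
    rcases hP with h | h; · exact absurd hItop (by simpa using h)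
    push_neg at h
    obtain ⟨a, b, hab, ha, hb⟩ := h
    -- K = (I : a), Ja = I + (a)
    set K : Ideal R := Submodule.comap (LinearMap.lsmul R R a) I with hKdef
    have hK_mem : ∀ r : R, r ∈ K ↔ a * r ∈ I := by
      intro r
      rw [hKdef, Submodule.mem_comap]
      simp [smul_eq_mul]
    have hIK : I ≤ K := fun r hr => (hK_mem r).mpr (Ideal.mul_mem_left I a hr)
    have hKI : K > I := lt_of_le_of_ne hIK (fun hEq => hb (hEq ▸ ((hK_mem b).mpr hab)))
    set Ja : Ideal R := I ⊔ Ideal.span {a} with hJadef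
    have haJa : a ∈ Ja := Submodule.mem_sup_right (Ideal.mem_span_singleton_self a)
    have hJaI : Ja > I := lt_of_le_of_ne le_sup_left (fun hEq => ha (hEq ▸ haJa))
    -- the maps
    set μ : (R ⧸ K) →ₗ[R] (R ⧸ I) :=
      Submodule.liftQ K ((I.mkQ).comp (LinearMap.lsmul R R a))
        (fun r hr => by
          simp only [LinearMap.mem_ker, LinearMap.comp_apply, lsmul_apply, smul_eq_mul]
          exact (Submodule.Quotient.mk_eq_zero I).mpr ((hK_mem r).mp hr)) with hμdef
    have hμ_mk : ∀ r : R, μ (Submodule.Quotient.mk r) = Submodule.Quotient.mk (a * r) := by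
      intro r
      rw [hμdef, Submodule.liftQ_apply, LinearMap.comp_apply, lsmul_apply, smul_eq_mul]
      rfl
    have hμ_inj : Function.Injective μ := by
      rw [← LinearMap.ker_eq_bot, hμdef, Submodule.ker_liftQ_eq_bot]
      intro r hr
      simp only [LinearMap.mem_ker, LinearMap.comp_apply, lsmul_apply, smul_eq_mul] at hr
      exact (hK_mem r).mpr ((Submodule.Quotient.mk_eq_zero I).mp hr)
    set qa : (R ⧸ I) →ₗ[R] (R ⧸ Ja) :=
      Submodule.liftQ I (Ja.mkQ) (by rw [Submodule.ker_mkQ]; exact le_of_lt hJaI) with hqadef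
    have hqa_mk : ∀ r : R, qa (Submodule.Quotient.mk r) = Submodule.Quotient.mk r :=
      fun r => rfl
    have hqa_surj : Function.Surjective qa := by
      intro z
      obtain ⟨w, rfl⟩ := Submodule.Quotient.mk_surjective Ja z
      exact ⟨Submodule.Quotient.mk w, rfl⟩
    have hexact_μq : Function.Exact μ qa := by
      intro z
      obtain ⟨w, rfl⟩ := Submodule.Quotient.mk_surjective I z
      constructor
      · intro h0
        have hw : w ∈ Ja := (Submodule.Quotient.mk_eq_zero Ja).mp (by rw [← hqa_mk w]; exact h0)
        rw [hJadef] at hw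
        obtain ⟨i, hi, c, hc, rfl⟩ := Submodule.mem_sup.mp hw
        obtain ⟨t, rfl⟩ := Ideal.mem_span_singleton'.mp hc
        refine ⟨Submodule.Quotient.mk t, ?_⟩
        rw [hμ_mk t]
        exact (Submodule.Quotient.eq I).mpr
          (by rw [show a * t - (i + t * a) = -i from by ring]; exact I.neg_mem hi)
      · rintro ⟨z', hz'⟩
        rw [← hz']
        obtain ⟨u, rfl⟩ := Submodule.Quotient.mk_surjective K z'
        rw [hμ_mk u, hqa_mk]
        exact (Submodule.Quotient.mk_eq_zero _).mpr (Ja.mul_mem_right u haJa)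
    have hι_inj : Function.Injective (μ.rTensor (F (n + 1))) :=
      Module.Flat.rTensor_preserves_injective_linearMap μ hμ_inj
    -- chase
    have h1 : lTensor (R ⧸ Ja) (d n) (qa.rTensor (F (n + 1)) x) = 0 := by
      rw [← LinearMap.comp_apply, lTensor_comp_rTensor, ← rTensor_comp_lTensor,
        LinearMap.comp_apply, hx, map_zero]
    obtain ⟨c, hc⟩ := (IH Ja hJaI n _).mp h1
    obtain ⟨b', rfl⟩ := rTensor_surjective (F (n + 1 + 1)) hqa_surj c
    have h2 : qa.rTensor (F (n + 1)) (x - lTensor (R ⧸ I) (d (n + 1)) b') = 0 := by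
      rw [map_sub, ← LinearMap.comp_apply, rTensor_comp_lTensor, ← lTensor_comp_rTensor,
        LinearMap.comp_apply, hc, sub_self]
    obtain ⟨a', ha'⟩ := (rTensor_exact (F (n + 1)) hexact_μq hqa_surj _).mp h2
    have h3 : lTensor (R ⧸ K) (d n) a' = 0 := by
      apply Module.Flat.rTensor_preserves_injective_linearMap μ hμ_inj
      rw [map_zero, ← LinearMap.comp_apply, rTensor_comp_lTensor, ← lTensor_comp_rTensor,
        LinearMap.comp_apply, ha', map_sub, hx, zero_sub, hzero _ _ _ n b', neg_zero]
    obtain ⟨a'', ha''⟩ := (IH K hKI n _).mp h3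
    refine ⟨b' + μ.rTensor (F (n + 1 + 1)) a'', ?_⟩
    rw [map_add, ← LinearMap.comp_apply (lTensor _ (d (n+1))), lTensor_comp_rTensor,
      ← rTensor_comp_lTensor, LinearMap.comp_apply, ha'', ha']
    abel

end Main

/-- Let `R` be a noetherian commutative ring and `F` a (possibly
unbounded) `ℤ`-indexed chain complex of flat `R`-modules, with differentials
`d n : F (n+1) → F n`.  If `κ(p) ⊗[R] F` is exact for every prime ideal `p` of `R`,
then `F` is exact. -/
theorem stmt_4 (R : Type*) [CommRing R] [IsNoetherianRing R]
    (F : ℤ → Type*) [∀ n, AddCommGroup (F n)] [∀ n, Module R (F n)]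
    [∀ n, Module.Flat R (F n)]
    (d : ∀ n : ℤ, F (n + 1) →ₗ[R] F n)
    (hcomplex : ∀ n : ℤ, (d n).comp (d (n + 1)) = 0)
    (hexact : ∀ (p : Ideal R) [p.IsPrime], ∀ n : ℤ,
      Function.Exact (LinearMap.lTensor (kappa p) (d (n + 1)))
        (LinearMap.lTensor (kappa p) (d n))) :
    ∀ n : ℤ, Function.Exact (d (n + 1)) (d n) := by
  intro n
  have key := aux_quot_exact R F d hcomplex hexact (⊥ : Ideal R) n
  -- transfer along the equivalence (R ⧸ ⊥) ⊗ F m ≃ F m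
  let e : ∀ m : ℤ, ((R ⧸ (⊥ : Ideal R)) ⊗[R] F m) ≃ₗ[R] F m := fun m =>
    (TensorProduct.congr (Submodule.quotEquivOfEqBot (⊥ : Ideal R) rfl)
      (LinearEquiv.refl R (F m))).trans (TensorProduct.lid R (F m))
  have he : ∀ (m : ℤ) (z : (R ⧸ (⊥ : Ideal R)) ⊗[R] F (m + 1)),
      e m (LinearMap.lTensor (R ⧸ (⊥ : Ideal R)) (d m) z) = d m (e (m + 1) z) := by
    intro m z
    induction z with
    | zero => simp
    | tmul a f =>
      obtain ⟨r, rfl⟩ := Submodule.Quotient.mk_surjective _ a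
      simp only [LinearMap.lTensor_tmul, e, LinearEquiv.trans_apply, TensorProduct.congr_tmul,
        LinearEquiv.refl_apply, TensorProduct.lid_tmul, Submodule.quotEquivOfEqBot_apply_mk,
        map_smul]
    | add u v hu hv => simp only [map_add, hu, hv]
  apply aux_exact_of
  · intro z
    rw [← LinearMap.comp_apply, hcomplex, LinearMap.zero_apply]
  · intro v hv
    have h1 : LinearMap.lTensor (R ⧸ (⊥ : Ideal R)) (d n) ((e (n + 1)).symm v) = 0 := by
      apply (e n).injective
      rw [he n, LinearEquiv.apply_symm_apply, hv, map_zero]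
    obtain ⟨z, hz⟩ := (key _).mp h1
    exact ⟨e (n + 1 + 1) z, by rw [← he (n + 1) z, hz, LinearEquiv.apply_symm_apply]⟩
end

section
/- Let R be a noetherian commutative ring and F : ⋯ → F_{n+1} → F_n → F_{n-1} → ⋯ a (possibly unbounded) ℤ-indexed chain complex of flat R-modules with differentials d_n : F_n → F_{n-1}. If κ(p) ⊗_R F is exact for every prime ideal p of R, then M ⊗_R F is exact for every R-module M, and the image of d_n is a flat R-module for every n. -/
open TensorProduct

namespace Stmt5Aux

open LinearMap

section Helpers
variable {R : Type*} [CommRing R]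

lemma tcomm {M M' X Y : Type*} [AddCommGroup M] [Module R M] [AddCommGroup M'] [Module R M']
    [AddCommGroup X] [Module R X] [AddCommGroup Y] [Module R Y]
    (f : M →ₗ[R] M') (h : X →ₗ[R] Y) (v : M ⊗[R] X) :
    rTensor Y f (lTensor M h v) = lTensor M' h (rTensor X f v) := by
  rw [← comp_apply, ← comp_apply, rTensor_comp_lTensor, lTensor_comp_rTensor]

lemma lid_lTensor {X Y : Type*} [AddCommGroup X] [Module R X] [AddCommGroup Y] [Module R Y]
    (f : X →ₗ[R] Y) (w : R ⊗[R] X) :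
    TensorProduct.lid R Y (lTensor R f w) = f (TensorProduct.lid R X w) := by
  induction w using TensorProduct.induction_on with
  | zero => simp
  | tmul r x => simp
  | add a b ha hb => simp [ha, hb]

lemma one_tmul_lid {X : Type*} [AddCommGroup X] [Module R X] (I : Ideal R) (w : R ⊗[R] X) :
    (1 : R ⧸ I) ⊗ₜ[R] (TensorProduct.lid R X w) = rTensor X I.mkQ w := by
  induction w using TensorProduct.induction_on with
  | zero => simp
  | tmul r x =>
      simp only [TensorProduct.lid_tmul, rTensor_tmul, Submodule.mkQ_apply]
      rw [tmul_smul, smul_tmul']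
      congr 1
      show r • (1 : R ⧸ I) = Submodule.Quotient.mk r
      rw [show (1 : R ⧸ I) = Submodule.Quotient.mk 1 from rfl, ← Submodule.Quotient.mk_smul,
        smul_eq_mul, mul_one]
  | add a b ha hb => simp only [map_add, tmul_add, ha, hb]

end Helpers

section Kappa
variable {R : Type*} [CommRing R] (p : Ideal R) [p.IsPrime]

noncomputable def kmap : (R ⧸ p) →ₗ[R] kappa p :=
  p.liftQ (Algebra.linearMap R (kappa p)) (by
    intro r hr
    simp only [LinearMap.mem_ker, Algebra.linearMap_apply]
    show IsLocalRing.residue _ (algebraMap R (Localization.AtPrime p) r) = 0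
    rw [IsLocalRing.residue_eq_zero_iff]
    rw [← Localization.AtPrime.comap_maximalIdeal (I := p)] at hr
    exact hr)

lemma kmap_inj : Function.Injective (kmap p) := by
  rw [← LinearMap.ker_eq_bot]
  apply Submodule.ker_liftQ_eq_bot
  intro r hr
  simp only [LinearMap.mem_ker, Algebra.linearMap_apply] at hr
  have : IsLocalRing.residue _ (algebraMap R (Localization.AtPrime p) r) = 0 := hr
  rw [IsLocalRing.residue_eq_zero_iff] at this
  rw [← Localization.AtPrime.comap_maximalIdeal (I := p)]
  exact this

lemma kmap_denom (k : kappa p) :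
    ∃ (s : R) (_ : s ∉ p) (a : R ⧸ p), s • k = kmap p a := by
  obtain ⟨z, rfl⟩ := IsLocalRing.residue_surjective (R := Localization.AtPrime p) k
  obtain ⟨⟨r, s⟩, rfl⟩ := IsLocalization.mk'_surjective p.primeCompl z
  refine ⟨s, s.2, Submodule.Quotient.mk r, ?_⟩
  have h1 : (s : R) • IsLocalization.mk' (Localization.AtPrime p) r s
      = algebraMap R (Localization.AtPrime p) r := by
    rw [Algebra.smul_def]
    exact IsLocalization.mk'_spec' _ r s
  have h2 : (s : R) • IsLocalRing.residue (Localization.AtPrime p) (IsLocalization.mk' _ r s)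
      = IsLocalRing.residue _ ((s : R) • IsLocalization.mk' (Localization.AtPrime p) r s) := by
    rw [Algebra.smul_def, Algebra.smul_def, map_mul]
    rfl
  rw [h2, h1]
  rfl

variable {X : Type*} [AddCommGroup X] [Module R X]

lemma kmap_rTensor_inj [Module.Flat R X] :
    Function.Injective (rTensor X (kmap p)) :=
  Module.Flat.rTensor_preserves_injective_linearMap _ (kmap_inj p)

lemma kmap_tensor_denom (Y : (kappa p) ⊗[R] X) :
    ∃ (s : R) (_ : s ∉ p) (y : (R ⧸ p) ⊗[R] X), rTensor X (kmap p) y = s • Y := by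
  induction Y using TensorProduct.induction_on with
  | zero => exact ⟨1, fun h => (Ideal.ne_top_iff_one p).mp ‹p.IsPrime›.ne_top h, 0, by simp⟩
  | tmul k f =>
      obtain ⟨s, hs, a, ha⟩ := kmap_denom p k
      exact ⟨s, hs, a ⊗ₜ f, by rw [rTensor_tmul, smul_tmul', ha]⟩
  | add Y₁ Y₂ h₁ h₂ =>
      obtain ⟨s₁, hs₁, y₁, hy₁⟩ := h₁
      obtain ⟨s₂, hs₂, y₂, hy₂⟩ := h₂
      refine ⟨s₁ * s₂, fun hm => (‹p.IsPrime›.mem_or_mem hm).elim hs₁ hs₂,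
        s₂ • y₁ + s₁ • y₂, ?_⟩
      rw [map_add, map_smul, map_smul, hy₁, hy₂, smul_add, smul_smul, smul_smul,
        mul_comm s₂ s₁]

lemma smul_quot_inj {s : R} (hs : s ∉ p) :
    Function.Injective (s • (LinearMap.id : (R ⧸ p) →ₗ[R] (R ⧸ p))) := by
  intro a b hab
  obtain ⟨a, rfl⟩ := Submodule.mkQ_surjective p a
  obtain ⟨b, rfl⟩ := Submodule.mkQ_surjective p b
  simp only [LinearMap.smul_apply, LinearMap.id_coe, id_eq, Submodule.mkQ_apply,
    ← Submodule.Quotient.mk_smul, smul_eq_mul] at hab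
  rw [Submodule.mkQ_apply, Submodule.mkQ_apply, Submodule.Quotient.eq] at *
  rw [← mul_sub] at hab
  exact (‹p.IsPrime›.mem_or_mem hab).resolve_left hs

lemma smul_tensor_inj [Module.Flat R X] {s : R} (hs : s ∉ p)
    {v w : (R ⧸ p) ⊗[R] X} (h : s • v = s • w) : v = w := by
  apply Module.Flat.rTensor_preserves_injective_linearMap (M := X) _ (smul_quot_inj p hs)
  rw [rTensor_smul, rTensor_id]
  simpa using h

end Kappa

section QMap
variable {R : Type*} [CommRing R] (p : Ideal R) (s : R)

noncomputable def qmap : (R ⧸ p) →ₗ[R] R ⧸ (p ⊔ Ideal.span {s}) :=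
  p.liftQ (p ⊔ Ideal.span {s}).mkQ (by rw [Submodule.ker_mkQ]; exact le_sup_left)

lemma qmap_surjective : Function.Surjective (qmap p s) := by
  intro c
  obtain ⟨r, rfl⟩ := Submodule.mkQ_surjective _ c
  exact ⟨Submodule.Quotient.mk r, rfl⟩

lemma qmap_exact :
    Function.Exact (s • (LinearMap.id : (R ⧸ p) →ₗ[R] (R ⧸ p))) (qmap p s) := by
  intro y
  obtain ⟨r, rfl⟩ := Submodule.mkQ_surjective p y
  constructor
  · intro h
    have hr : r ∈ p ⊔ Ideal.span {s} := by
      rwa [show qmap p s (Submodule.mkQ p r) = (p ⊔ Ideal.span {s}).mkQ r from rfl,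
        Submodule.mkQ_apply, Submodule.Quotient.mk_eq_zero] at h
    obtain ⟨a, ha, b, hb, hab⟩ := Submodule.mem_sup.mp hr
    obtain ⟨c, rfl⟩ := Ideal.mem_span_singleton'.mp hb
    refine ⟨Submodule.Quotient.mk c, ?_⟩
    simp only [LinearMap.smul_apply, LinearMap.id_coe, id_eq, Submodule.mkQ_apply,
      ← Submodule.Quotient.mk_smul, smul_eq_mul]
    rw [Submodule.Quotient.eq]
    have : s * c - r = -a := by rw [← hab]; ring
    rw [this]
    exact neg_mem ha
  · rintro ⟨c, hc⟩
    rw [← hc]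
    obtain ⟨c, rfl⟩ := Submodule.mkQ_surjective p c
    have h1 : (s • (LinearMap.id : (R ⧸ p) →ₗ[R] (R ⧸ p))) (Submodule.mkQ p c)
        = Submodule.mkQ p (s * c) := by
      simp only [LinearMap.smul_apply, LinearMap.id_coe, id_eq, Submodule.mkQ_apply,
        ← Submodule.Quotient.mk_smul, smul_eq_mul]
    rw [h1]
    show (p ⊔ Ideal.span {s}).mkQ (s * c) = 0
    rw [Submodule.mkQ_apply, Submodule.Quotient.mk_eq_zero]
    exact Submodule.mem_sup_right (Ideal.mem_span_singleton'.mpr ⟨c, mul_comm c s⟩)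

variable {X : Type*} [AddCommGroup X] [Module R X]

lemma qmap_smul_tensor_zero (v : (R ⧸ (p ⊔ Ideal.span {s})) ⊗[R] X) : s • v = 0 := by
  have h0 : (s • (LinearMap.id : (R ⧸ (p ⊔ Ideal.span {s})) →ₗ[R] _)) = 0 := by
    apply LinearMap.ext
    intro c
    obtain ⟨r, rfl⟩ := Submodule.mkQ_surjective _ c
    simp only [LinearMap.smul_apply, LinearMap.id_coe, id_eq, Submodule.mkQ_apply,
      ← Submodule.Quotient.mk_smul, smul_eq_mul, LinearMap.zero_apply]
    rw [Submodule.Quotient.mk_eq_zero]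
    exact Submodule.mem_sup_right (Ideal.mem_span_singleton'.mpr ⟨r, mul_comm r s⟩)
  have h1 : s • v = rTensor X (s • LinearMap.id) v := by
    rw [rTensor_smul, rTensor_id]; rfl
  rw [h1, h0, rTensor_zero]
  rfl

lemma qmap_tensor_ker (v : (R ⧸ p) ⊗[R] X)
    (h : rTensor X (qmap p s) v = 0) : ∃ w, s • w = v := by
  obtain ⟨w, hw⟩ := (rTensor_exact X (qmap_exact p s) (qmap_surjective p s) v).mp h
  refine ⟨w, ?_⟩
  rw [← hw, rTensor_smul, rTensor_id]
  rfl

end QMap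

section Complex

variable {R : Type*} [CommRing R]
  {F : ℤ → Type*} [∀ n, AddCommGroup (F n)] [∀ n, Module R (F n)]

/-- Exactness of `M ⊗ F` at spot `n`. -/
abbrev TExact (d : ∀ n : ℤ, F (n + 1) →ₗ[R] F n) (M : Type*) [AddCommGroup M] [Module R M]
    (n : ℤ) : Prop :=
  Function.Exact (LinearMap.lTensor M (d (n + 1))) (LinearMap.lTensor M (d n))

variable {d : ∀ n : ℤ, F (n + 1) →ₗ[R] F n} (hd : ∀ n : ℤ, (d n).comp (d (n + 1)) = 0)

section BasicM
variable {M : Type*} [AddCommGroup M] [Module R M]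

include hd in
lemma lTensor_d_d (n : ℤ) (y : M ⊗[R] F (n + 1 + 1)) :
    lTensor M (d n) (lTensor M (d (n + 1)) y) = 0 := by
  rw [← comp_apply, ← lTensor_comp, hd, lTensor_zero]
  rfl

include hd in
lemma tExact_of_ker_le {n : ℤ}
    (h : ∀ x : M ⊗[R] F (n + 1), lTensor M (d n) x = 0 →
      x ∈ Set.range (lTensor M (d (n + 1)))) : TExact d M n := by
  intro x
  refine ⟨h x, ?_⟩
  rintro ⟨y, rfl⟩
  exact lTensor_d_d hd n y

include hd in
lemma tExact_of_subsingleton [Subsingleton M] (n : ℤ) : TExact d M n := by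
  apply tExact_of_ker_le hd
  intro x _
  have hid : (LinearMap.id : M →ₗ[R] M) = 0 := Subsingleton.elim _ _
  have h0 : x = 0 := by
    rw [show x = rTensor (F (n + 1)) LinearMap.id x by rw [rTensor_id]; rfl, hid, rTensor_zero]
    rfl
  exact ⟨0, by simp [h0]⟩

end BasicM

include hd in
lemma tExact_congr {M M' : Type*} [AddCommGroup M] [Module R M] [AddCommGroup M'] [Module R M']
    (e : M ≃ₗ[R] M') {n : ℤ} (h : TExact d M n) : TExact d M' n := by
  apply tExact_of_ker_le hd
  intro x hx
  have h0 : lTensor M (d n) (rTensor (F (n + 1)) e.symm.toLinearMap x) = 0 := by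
    rw [← tcomm, hx, map_zero]
  obtain ⟨y, hy⟩ := (h _).mp h0
  refine ⟨rTensor _ e.toLinearMap y, ?_⟩
  rw [← tcomm, hy, ← rTensor_comp_apply]
  rw [show e.toLinearMap ∘ₗ e.symm.toLinearMap = LinearMap.id from by ext v; simp, rTensor_id]
  rfl

variable [∀ n, Module.Flat R (F n)]

include hd in
/-- The two-out-of-three lemma for a short exact sequence of coefficients. -/
lemma tExact_of_ses {A B C : Type*} [AddCommGroup A] [Module R A] [AddCommGroup B] [Module R B]
    [AddCommGroup C] [Module R C] (f : A →ₗ[R] B) (g : B →ₗ[R] C)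
    (hf : Function.Injective f) (hg : Function.Surjective g) (hfg : Function.Exact f g)
    {n : ℤ} (hA : TExact d A n) (hC : TExact d C n) : TExact d B n := by
  apply tExact_of_ker_le hd
  intro x hx
  have h1 : lTensor C (d n) (rTensor (F (n + 1)) g x) = 0 := by rw [← tcomm, hx, map_zero]
  obtain ⟨c, hc⟩ := (hC _).mp h1
  obtain ⟨b, rfl⟩ := rTensor_surjective (F (n + 1 + 1)) hg c
  have h2 : rTensor (F (n + 1)) g (x - lTensor B (d (n + 1)) b) = 0 := by
    rw [map_sub, tcomm, hc, sub_self]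
  obtain ⟨a, ha⟩ := (rTensor_exact (F (n + 1)) hfg hg _).mp h2
  have h4 : rTensor (F n) f (lTensor A (d n) a) = 0 := by
    rw [tcomm, ha, map_sub, hx, lTensor_d_d hd, sub_self]
  have h5 : lTensor A (d n) a = 0 :=
    Module.Flat.rTensor_preserves_injective_linearMap f hf (by rw [h4, map_zero])
  obtain ⟨a', ha'⟩ := (hA _).mp h5
  refine ⟨b + rTensor _ f a', ?_⟩
  rw [map_add, ← tcomm, ha', ha]
  abel

include hd in
lemma tExact_quot_prime (p : Ideal R) [p.IsPrime]
    (hex : ∀ n : ℤ, Function.Exact (lTensor (kappa p) (d (n + 1))) (lTensor (kappa p) (d n)))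
    (IH : ∀ J : Ideal R, J > p → ∀ n : ℤ, TExact d (R ⧸ J) n) (n : ℤ) :
    TExact d (R ⧸ p) n := by
  apply tExact_of_ker_le hd
  intro x hx
  have h1 : lTensor (kappa p) (d n) (rTensor (F (n + 1)) (kmap p) x) = 0 := by
    rw [← tcomm, hx, map_zero]
  obtain ⟨Y, hY⟩ := (hex n _).mp h1
  obtain ⟨s, hs, y, hy⟩ := kmap_tensor_denom p Y
  have h3 : s • x = lTensor (R ⧸ p) (d (n + 1)) y := by
    apply kmap_rTensor_inj p
    rw [map_smul, tcomm, hy, map_smul, hY]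
  have hlt : p < p ⊔ Ideal.span {s} := by
    refine lt_of_le_of_ne le_sup_left (fun hEq => hs ?_)
    rw [hEq]
    exact Submodule.mem_sup_right (Submodule.mem_span_singleton_self s)
  have h4 : lTensor (R ⧸ (p ⊔ Ideal.span {s})) (d (n + 1))
      (rTensor (F (n + 1 + 1)) (qmap p s) y) = 0 := by
    rw [← tcomm, ← h3, map_smul]
    exact qmap_smul_tensor_zero p s _
  obtain ⟨z, hz⟩ := (IH (p ⊔ Ideal.span {s}) hlt (n + 1) _).mp h4
  obtain ⟨z', hz'⟩ := rTensor_surjective (F (n + 1 + 1 + 1)) (qmap_surjective p s) z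
  have h5 : rTensor (F (n + 1 + 1)) (qmap p s) (y - lTensor _ (d (n + 1 + 1)) z') = 0 := by
    rw [map_sub, tcomm, hz', hz, sub_self]
  obtain ⟨w, hw⟩ := qmap_tensor_ker p s _ h5
  refine ⟨w, smul_tensor_inj p hs ?_⟩
  rw [← map_smul, hw, map_sub, lTensor_d_d hd, sub_zero, ← h3]

include hd in
lemma tExact_quot [IsNoetherianRing R]
    (hex : ∀ (p : Ideal R) [p.IsPrime], ∀ n : ℤ,
      Function.Exact (lTensor (kappa p) (d (n + 1))) (lTensor (kappa p) (d n)))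
    (I : Ideal R) (n : ℤ) : TExact d (R ⧸ I) n := by
  induction I using IsNoetherian.induction generalizing n with
  | _ I IH =>
  by_cases hI : I = ⊤
  · have : Subsingleton (R ⧸ I) := Submodule.Quotient.subsingleton_iff.mpr hI
    exact tExact_of_subsingleton hd n
  by_cases hp : Ideal.IsPrime I
  · exact tExact_quot_prime hd I (hex I) IH n
  · have : Nontrivial (R ⧸ I) := Submodule.Quotient.nontrivial_iff.mpr hI
    obtain ⟨p, hpA⟩ := associatedPrimes.nonempty R (R ⧸ I)
    obtain ⟨hp_prime, xbar, hxp⟩ := isAssociatedPrime_iff.mp hpA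
    rw [Submodule.bot_colon'] at hxp
    obtain ⟨xt, rfl⟩ := Submodule.mkQ_surjective I xbar
    have hxne : Submodule.mkQ I xt ≠ 0 := by
      intro h0
      rw [h0, Submodule.span_zero_singleton, Submodule.annihilator_bot] at hxp
      exact hp_prime.ne_top hxp
    have hker : p = LinearMap.ker (LinearMap.toSpanSingleton R (R ⧸ I) (Submodule.mkQ I xt)) := by
      rw [hxp]
      ext r
      rw [Submodule.mem_annihilator_span_singleton, LinearMap.mem_ker,
        LinearMap.toSpanSingleton_apply]
    have hIp : I < p := by
      refine lt_of_le_of_ne ?_ (fun hEq => hp (hEq ▸ hp_prime))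
      intro i hi
      rw [hxp, Submodule.mem_annihilator_span_singleton, Submodule.mkQ_apply,
        ← Submodule.Quotient.mk_smul, smul_eq_mul, Submodule.Quotient.mk_eq_zero]
      exact Ideal.mul_mem_right xt I hi
    have hxtI : xt ∉ I := fun h => hxne (by
      rw [Submodule.mkQ_apply, Submodule.Quotient.mk_eq_zero]; exact h)
    have hJ : I < I ⊔ Ideal.span {xt} := by
      refine lt_of_le_of_ne le_sup_left (fun hEq => hxtI ?_)
      rw [hEq]
      exact Submodule.mem_sup_right (Submodule.mem_span_singleton_self xt)
    set f : (R ⧸ p) →ₗ[R] (R ⧸ I) :=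
      p.liftQ (LinearMap.toSpanSingleton R (R ⧸ I) (Submodule.mkQ I xt)) (le_of_eq hker)
    set g : (R ⧸ I) →ₗ[R] R ⧸ (I ⊔ Ideal.span {xt}) :=
      I.liftQ (I ⊔ Ideal.span {xt}).mkQ (by rw [Submodule.ker_mkQ]; exact le_sup_left)
    have hf : Function.Injective f := by
      rw [← LinearMap.ker_eq_bot]
      exact Submodule.ker_liftQ_eq_bot p _ _ (le_of_eq hker.symm)
    have hg : Function.Surjective g := by
      intro c
      obtain ⟨r, rfl⟩ := Submodule.mkQ_surjective _ c
      exact ⟨Submodule.Quotient.mk r, rfl⟩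
    have hfg : Function.Exact f g := by
      rw [LinearMap.exact_iff]
      rw [Submodule.ker_liftQ, Submodule.ker_mkQ, Submodule.range_liftQ]
      rw [Submodule.map_sup]
      have h1 : Submodule.map (Submodule.mkQ I) I = ⊥ := by
        rw [eq_bot_iff]
        rintro _ ⟨a, ha, rfl⟩
        rw [Submodule.mem_bot, Submodule.mkQ_apply, Submodule.Quotient.mk_eq_zero]
        exact ha
      have h2 : Submodule.map (Submodule.mkQ I) (Ideal.span {xt})
          = Submodule.span R {Submodule.mkQ I xt} := by
        rw [Ideal.span, Submodule.map_span, Set.image_singleton]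
      rw [h1, bot_sup_eq, h2, LinearMap.span_singleton_eq_range]
    exact tExact_of_ses hd f g hf hg hfg (IH p hIp n) (IH _ hJ n)

include hd in
lemma tExact_quot_module [IsNoetherianRing R]
    (hex : ∀ (p : Ideal R) [p.IsPrime], ∀ n : ℤ,
      Function.Exact (lTensor (kappa p) (d (n + 1))) (lTensor (kappa p) (d n)))
    (M : Type*) [AddCommGroup M] [Module R M] [Module.Finite R M]
    (W : Submodule R M) (n : ℤ) : TExact d (M ⧸ W) n := by
  induction W using IsNoetherian.induction generalizing n with
  | _ W IH =>
  rcases subsingleton_or_nontrivial (M ⧸ W) with hcase | hcase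
  · exact tExact_of_subsingleton hd n
  · obtain ⟨p, hpA⟩ := associatedPrimes.nonempty R (M ⧸ W)
    obtain ⟨hp_prime, ybar, hyp⟩ := isAssociatedPrime_iff.mp hpA
    rw [Submodule.bot_colon'] at hyp
    obtain ⟨yt, rfl⟩ := Submodule.mkQ_surjective W ybar
    have hyne : Submodule.mkQ W yt ≠ 0 := by
      intro h0
      rw [h0, Submodule.span_zero_singleton, Submodule.annihilator_bot] at hyp
      exact hp_prime.ne_top hyp
    have hytW : yt ∉ W := fun h => hyne (by
      rw [Submodule.mkQ_apply, Submodule.Quotient.mk_eq_zero]; exact h)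
    have hker : p = LinearMap.ker (LinearMap.toSpanSingleton R (M ⧸ W) (Submodule.mkQ W yt)) := by
      rw [hyp]
      ext r
      rw [Submodule.mem_annihilator_span_singleton, LinearMap.mem_ker,
        LinearMap.toSpanSingleton_apply]
    have hW' : W < W ⊔ (R ∙ yt) := by
      refine lt_of_le_of_ne le_sup_left (fun hEq => hytW ?_)
      rw [hEq]
      exact Submodule.mem_sup_right (Submodule.mem_span_singleton_self yt)
    set f : (R ⧸ p) →ₗ[R] (M ⧸ W) :=
      p.liftQ (LinearMap.toSpanSingleton R (M ⧸ W) (Submodule.mkQ W yt)) (le_of_eq hker)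
    set g : (M ⧸ W) →ₗ[R] M ⧸ (W ⊔ (R ∙ yt)) :=
      W.liftQ (W ⊔ (R ∙ yt)).mkQ (by rw [Submodule.ker_mkQ]; exact le_sup_left)
    have hf : Function.Injective f := by
      rw [← LinearMap.ker_eq_bot]
      exact Submodule.ker_liftQ_eq_bot p _ _ (le_of_eq hker.symm)
    have hg : Function.Surjective g := by
      intro c
      obtain ⟨r, rfl⟩ := Submodule.mkQ_surjective _ c
      exact ⟨Submodule.Quotient.mk r, rfl⟩
    have hfg : Function.Exact f g := by
      rw [LinearMap.exact_iff]
      rw [Submodule.ker_liftQ, Submodule.ker_mkQ, Submodule.range_liftQ]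
      rw [Submodule.map_sup]
      have h1 : Submodule.map (Submodule.mkQ W) W = ⊥ := by
        rw [eq_bot_iff]
        rintro _ ⟨a, ha, rfl⟩
        rw [Submodule.mem_bot, Submodule.mkQ_apply, Submodule.Quotient.mk_eq_zero]
        exact ha
      rw [h1, bot_sup_eq, Submodule.map_span, Set.image_singleton]
      rw [LinearMap.span_singleton_eq_range]
    exact tExact_of_ses hd f g hf hg hfg (tExact_quot hd hex p n) (IH _ hW' n)

include hd in
lemma tExact_finite [IsNoetherianRing R]
    (hex : ∀ (p : Ideal R) [p.IsPrime], ∀ n : ℤ,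
      Function.Exact (lTensor (kappa p) (d (n + 1))) (lTensor (kappa p) (d n)))
    (M : Type*) [AddCommGroup M] [Module R M] [Module.Finite R M] (n : ℤ) : TExact d M n :=
  tExact_congr hd (Submodule.quotEquivOfEqBot (⊥ : Submodule R M) rfl)
    (tExact_quot_module hd hex M ⊥ n)

lemma exists_fg_factor {M X : Type*} [AddCommGroup M] [Module R M] [AddCommGroup X] [Module R X]
    (x : M ⊗[R] X) :
    ∃ (N : Submodule R M), N.FG ∧ x ∈ Set.range (rTensor X N.subtype) := by
  induction x using TensorProduct.induction_on with
  | zero => exact ⟨⊥, Submodule.fg_bot, 0, map_zero _⟩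
  | tmul m f =>
      exact ⟨R ∙ m, Submodule.fg_span_singleton m,
        ⟨m, Submodule.mem_span_singleton_self m⟩ ⊗ₜ f, by rw [rTensor_tmul]; rfl⟩
  | add a b ha hb =>
      obtain ⟨N₁, h₁, u₁, hu₁⟩ := ha
      obtain ⟨N₂, h₂, u₂, hu₂⟩ := hb
      refine ⟨N₁ ⊔ N₂, h₁.sup h₂,
        rTensor X (Submodule.inclusion (le_sup_left : N₁ ≤ N₁ ⊔ N₂)) u₁ +
          rTensor X (Submodule.inclusion (le_sup_right : N₂ ≤ N₁ ⊔ N₂)) u₂, ?_⟩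
      rw [map_add, ← rTensor_comp_apply, ← rTensor_comp_apply,
        Submodule.subtype_comp_inclusion, Submodule.subtype_comp_inclusion, hu₁, hu₂]

include hd in
lemma tExact_all [IsNoetherianRing R]
    (hex : ∀ (p : Ideal R) [p.IsPrime], ∀ n : ℤ,
      Function.Exact (lTensor (kappa p) (d (n + 1))) (lTensor (kappa p) (d n)))
    (M : Type*) [AddCommGroup M] [Module R M] (n : ℤ) : TExact d M n := by
  apply tExact_of_ker_le hd
  intro x hx
  obtain ⟨N, hNfg, x', hx'⟩ := exists_fg_factor x
  haveI : Module.Finite R N := Module.Finite.iff_fg.mpr hNfg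
  have h1 : rTensor (F n) N.subtype (lTensor N (d n) x') = 0 := by
    rw [tcomm, hx', hx]
  have h0 : lTensor N (d n) x' = 0 :=
    Module.Flat.rTensor_preserves_injective_linearMap _ N.injective_subtype
      (by rw [h1, map_zero])
  obtain ⟨y', hy'⟩ := (tExact_finite hd hex N n _).mp h0
  exact ⟨rTensor _ N.subtype y', by rw [← tcomm, hy', hx']⟩

include hd in
lemma lTensor_ker_subtype_inj [IsNoetherianRing R]
    (hq : ∀ (I : Ideal R) (n : ℤ), TExact d (R ⧸ I) n) (I : Ideal R) (n : ℤ)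
    (hkr : LinearMap.ker (d n) = LinearMap.range (d (n + 1)))
    (a : (R ⧸ I) ⊗[R] (LinearMap.ker (d n)))
    (ha : lTensor (R ⧸ I) (LinearMap.ker (d n)).subtype a = 0) : a = 0 := by
  have hmem : ∀ v, d (n + 1) v ∈ LinearMap.ker (d n) := fun v =>
    hkr ▸ LinearMap.mem_range_self _ v
  set d' : F (n + 1 + 1) →ₗ[R] LinearMap.ker (d n) :=
    (d (n + 1)).codRestrict (LinearMap.ker (d n)) hmem with hd'
  have hd'_surj : Function.Surjective d' := by
    rintro ⟨k, hk⟩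
    rw [hkr] at hk
    obtain ⟨v, hv⟩ := hk
    exact ⟨v, Subtype.ext hv⟩
  obtain ⟨b, rfl⟩ := lTensor_surjective (R ⧸ I) hd'_surj a
  have hsub : (LinearMap.ker (d n)).subtype ∘ₗ d' = d (n + 1) :=
    LinearMap.subtype_comp_codRestrict _ _ _
  have hb : lTensor (R ⧸ I) (d (n + 1)) b = 0 := by
    rw [← hsub, lTensor_comp, comp_apply]
    exact ha
  obtain ⟨c, hc⟩ := (hq I (n + 1) b).mp hb
  rw [← hc, ← lTensor_comp_apply]
  have hz : d' ∘ₗ d (n + 1 + 1) = 0 := by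
    apply LinearMap.ext
    intro v
    apply Subtype.ext
    show (d (n + 1)) (d (n + 1 + 1) v) = 0
    exact DFunLike.congr_fun (hd (n + 1)) v
  rw [hz, lTensor_zero]
  rfl

include hd in
lemma flat_range [IsNoetherianRing R]
    (hq : ∀ (I : Ideal R) (n : ℤ), TExact d (R ⧸ I) n)
    (hR : ∀ n : ℤ, TExact d R n) (n : ℤ) :
    Module.Flat R (LinearMap.range (d n)) := by
  have hkr : LinearMap.ker (d n) = LinearMap.range (d (n + 1)) := by
    apply le_antisymm
    · intro k hk
      have h1 : lTensor R (d n) ((1 : R) ⊗ₜ k) = 0 := by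
        rw [lTensor_tmul, LinearMap.mem_ker.mp hk, tmul_zero]
      obtain ⟨y, hy⟩ := (hR n _).mp h1
      refine ⟨TensorProduct.lid R _ y, ?_⟩
      rw [← lid_lTensor, hy]
      simp
    · rintro _ ⟨v, rfl⟩
      exact LinearMap.mem_ker.mpr (DFunLike.congr_fun (hd n) v)
  set K := LinearMap.ker (d n) with hKdef
  suffices hC : Module.Flat R (F (n + 1) ⧸ K) by
    exact Module.Flat.of_linearEquiv (d n).quotKerEquivRange.symm
  rw [Module.Flat.iff_rTensor_injective']
  intro I
  rw [injective_iff_map_eq_zero]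
  intro u hu
  obtain ⟨v, hv⟩ := lTensor_surjective I (Submodule.mkQ_surjective K) u
  set x : F (n + 1) := TensorProduct.lid R _ (rTensor (F (n + 1)) I.subtype v) with hxdef
  have hxK : x ∈ K := by
    have h2 : K.mkQ x = 0 := by
      rw [hxdef, ← lid_lTensor, ← tcomm, hv]
      show TensorProduct.lid R (F (n+1) ⧸ K) (rTensor (F (n+1) ⧸ K) I.subtype u) = 0
      rw [hu, map_zero]
    rwa [Submodule.mkQ_apply, Submodule.Quotient.mk_eq_zero] at h2
  have hθ : ((1 : R ⧸ I) ⊗ₜ[R] (⟨x, hxK⟩ : K) : (R ⧸ I) ⊗[R] K) = 0 := by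
    apply lTensor_ker_subtype_inj hd hq I n hkr
    rw [lTensor_tmul]
    show (1 : R ⧸ I) ⊗ₜ[R] x = (0 : (R ⧸ I) ⊗[R] F (n + 1))
    rw [hxdef, one_tmul_lid, ← rTensor_comp_apply]
    have hz : I.mkQ ∘ₗ I.subtype = 0 := by
      apply LinearMap.ext
      rintro ⟨i, hi⟩
      rw [comp_apply, Submodule.subtype_apply, Submodule.mkQ_apply, LinearMap.zero_apply,
        Submodule.Quotient.mk_eq_zero]
      exact hi
    rw [hz, rTensor_zero]
    rfl
  have hxIK : (⟨x, hxK⟩ : K) ∈ (I • ⊤ : Submodule R K) := by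
    have h3 := quotTensorEquivQuotSMul_mk_tmul (M := ↥K) I 1 ⟨x, hxK⟩
    rw [map_one, one_smul] at h3
    rw [hθ] at h3
    have h0 : quotTensorEquivQuotSMul (↥K) I 0 = 0 :=
      (quotTensorEquivQuotSMul (↥K) I).toLinearMap.map_zero
    rw [h0] at h3
    rw [← Submodule.Quotient.mk_eq_zero (I • ⊤ : Submodule R K)]
    exact h3.symm
  have hrep : ∃ w : I ⊗[R] K,
      TensorProduct.lid R _ (rTensor (F (n + 1)) I.subtype (lTensor I K.subtype w)) = x := by
    have key : ∀ k : K, k ∈ (I • ⊤ : Submodule R K) → (∃ w : I ⊗[R] K,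
        TensorProduct.lid R _ (rTensor (F (n + 1)) I.subtype (lTensor I K.subtype w))
          = (k : F (n + 1))) := by
      intro k hk
      refine Submodule.smul_induction_on hk ?_ ?_
      · intro r hr m _
        refine ⟨(⟨r, hr⟩ : I) ⊗ₜ m, ?_⟩
        rw [lTensor_tmul, rTensor_tmul]
        simp
      · rintro a b ⟨w₁, h₁⟩ ⟨w₂, h₂⟩
        exact ⟨w₁ + w₂, by rw [map_add, map_add, map_add, h₁, h₂]; rfl⟩
    exact key _ hxIK
  obtain ⟨w, hw⟩ := hrep
  have hv0 : v = lTensor I K.subtype w := by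
    have h4 : rTensor (F (n + 1)) I.subtype (v - lTensor I K.subtype w) = 0 := by
      apply (TensorProduct.lid R (F (n + 1))).injective
      rw [map_sub, map_sub, hw, ← hxdef, map_zero, sub_self]
    have h5 : v - lTensor I K.subtype w = 0 := by
      apply Module.Flat.rTensor_preserves_injective_linearMap
        (M := F (n + 1)) I.subtype I.injective_subtype
      rw [h4, map_zero]
    exact sub_eq_zero.mp h5
  have hms : K.mkQ ∘ₗ K.subtype = 0 := by
    apply LinearMap.ext
    rintro ⟨k, hk⟩
    rw [comp_apply, Submodule.subtype_apply, Submodule.mkQ_apply, LinearMap.zero_apply,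
      Submodule.Quotient.mk_eq_zero]
    exact hk
  rw [← hv, hv0, ← lTensor_comp_apply, hms, lTensor_zero]
  rfl

end Complex

end Stmt5Aux

open Stmt5Aux LinearMap in
/-- Let `R` be a noetherian commutative ring and `F` a (possibly
unbounded) `ℤ`-indexed chain complex of flat `R`-modules with differentials
`d n : F (n+1) → F n`.  If `κ(p) ⊗[R] F` is exact for every prime ideal `p`, then
`M ⊗[R] F` is exact for every `R`-module `M`, and the image of each differential is a
flat `R`-module. -/
theorem stmt_5 (R : Type*) [CommRing R] [IsNoetherianRing R]
    (F : ℤ → Type*) [∀ n, AddCommGroup (F n)] [∀ n, Module R (F n)]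
    [∀ n, Module.Flat R (F n)]
    (d : ∀ n : ℤ, F (n + 1) →ₗ[R] F n)
    (hcomplex : ∀ n : ℤ, (d n).comp (d (n + 1)) = 0)
    (hexact : ∀ (p : Ideal R) [p.IsPrime], ∀ n : ℤ,
      Function.Exact (LinearMap.lTensor (kappa p) (d (n + 1)))
        (LinearMap.lTensor (kappa p) (d n))) :
    (∀ (M : Type*) [AddCommGroup M] [Module R M], ∀ n : ℤ,
      Function.Exact (LinearMap.lTensor M (d (n + 1))) (LinearMap.lTensor M (d n))) ∧
      ∀ n : ℤ, Module.Flat R (LinearMap.range (d n)) := by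
  constructor
  · intro M _ _ n
    exact tExact_all hcomplex hexact M n
  · intro n
    exact flat_range hcomplex (fun I m => tExact_quot hcomplex hexact I m)
      (fun m => tExact_all hcomplex hexact R m) n
end

section
/- Let R be a noetherian commutative ring and φ : F₁ → F₀ an R-linear map between flat R-modules. If for every prime ideal p of R the induced map κ(p) ⊗_R φ : κ(p) ⊗_R F₁ → κ(p) ⊗_R F₀ is injective, then φ is injective and Coker φ = F₀/φ(F₁) is a flat R-module. -/
open TensorProduct

section Aux

variable {R : Type*} [CommRing R] {F₁ F₀ : Type*} [AddCommGroup F₁] [Module R F₁]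
  [AddCommGroup F₀] [Module R F₀] (φ : F₁ →ₗ[R] F₀)

/-- Transfer injectivity of `A' ⊗ φ` to `A ⊗ φ` along an injective map `A → A'`,
when `F₁` is flat. -/
lemma aux_mono [Module.Flat R F₁] {A A' : Type*} [AddCommGroup A] [Module R A]
    [AddCommGroup A'] [Module R A'] (e : A →ₗ[R] A') (he : Function.Injective e)
    (hA' : Function.Injective (φ.lTensor A')) : Function.Injective (φ.lTensor A) := by
  have h1 : Function.Injective (e.rTensor F₁) :=
    Module.Flat.rTensor_preserves_injective_linearMap e he
  have h2 : Function.Injective ((φ.lTensor A').comp (e.rTensor F₁)) := hA'.comp h1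
  rw [LinearMap.lTensor_comp_rTensor, ← LinearMap.rTensor_comp_lTensor] at h2
  rw [LinearMap.coe_comp] at h2
  exact h2.of_comp

/-- Four-lemma step: given a short exact sequence `0 → A → B → C → 0`, if `A ⊗ φ` and
`C ⊗ φ` are injective and `F₀` is flat, then `B ⊗ φ` is injective. -/
lemma aux_four [Module.Flat R F₀] {A B C : Type*} [AddCommGroup A] [Module R A]
    [AddCommGroup B] [Module R B] [AddCommGroup C] [Module R C]
    (f : A →ₗ[R] B) (g : B →ₗ[R] C) (hf : Function.Injective f)
    (hfg : Function.Exact f g) (hg : Function.Surjective g)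
    (hA : Function.Injective (φ.lTensor A)) (hC : Function.Injective (φ.lTensor C)) :
    Function.Injective (φ.lTensor B) := by
  rw [injective_iff_map_eq_zero]
  intro b hb
  have hrow₁ : Function.Exact (f.rTensor F₁) (g.rTensor F₁) :=
    rTensor_exact F₁ hfg hg
  have h1 : φ.lTensor C (g.rTensor F₁ b) = 0 := by
    rw [← LinearMap.comp_apply, LinearMap.lTensor_comp_rTensor,
      ← LinearMap.rTensor_comp_lTensor, LinearMap.comp_apply, hb, map_zero]
  have h2 : g.rTensor F₁ b = 0 := hC (h1.trans (map_zero _).symm)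
  obtain ⟨a, ha⟩ := (hrow₁ b).mp h2
  have h3 : f.rTensor F₀ (φ.lTensor A a) = 0 := by
    rw [← LinearMap.comp_apply, LinearMap.rTensor_comp_lTensor,
      ← LinearMap.lTensor_comp_rTensor, LinearMap.comp_apply, ha, hb]
  have h4 : φ.lTensor A a = 0 :=
    (Module.Flat.rTensor_preserves_injective_linearMap f hf) (h3.trans (map_zero _).symm)
  have h5 : a = 0 := hA (h4.trans (map_zero _).symm)
  rw [← ha, h5, map_zero]

end Aux

section Key

variable {R : Type*} [CommRing R] [IsNoetherianRing R] {F₁ F₀ : Type*}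
  [AddCommGroup F₁] [Module R F₁] [AddCommGroup F₀] [Module R F₀]
  [Module.Flat R F₁] [Module.Flat R F₀] (φ : F₁ →ₗ[R] F₀)

/-- The natural injective `R`-linear map `R ⧸ p → κ(p)`. -/
lemma aux_residue (p : Ideal R) [p.IsPrime] :
    ∃ e : (R ⧸ p) →ₗ[R] kappa p, Function.Injective e := by
  have hker : ∀ a : R, Algebra.linearMap R (kappa p) a = 0 ↔ a ∈ p := by
    intro a
    have : (Algebra.linearMap R (kappa p)) a
        = IsLocalRing.residue (Localization.AtPrime p)
            (algebraMap R (Localization.AtPrime p) a) := by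
      simp only [Algebra.linearMap_apply]
      rw [IsScalarTower.algebraMap_apply R (Localization.AtPrime p) (kappa p)]
      rfl
    rw [this]
    constructor
    · intro h0
      have : algebraMap R (Localization.AtPrime p) a ∈
          IsLocalRing.maximalIdeal (Localization.AtPrime p) :=
        (Ideal.Quotient.eq_zero_iff_mem).mp h0
      have := Ideal.mem_comap.mpr this
      rwa [← Ideal.under_def, Localization.AtPrime.comap_maximalIdeal] at this
    · intro hap
      apply Ideal.Quotient.eq_zero_iff_mem.mpr
      have : a ∈ Ideal.comap (algebraMap R (Localization.AtPrime p))
          (IsLocalRing.maximalIdeal (Localization.AtPrime p)) := by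
        rw [← Ideal.under_def, Localization.AtPrime.comap_maximalIdeal]; exact hap
      exact this
  refine ⟨Submodule.liftQ p (Algebra.linearMap R (kappa p))
    (fun a ha => (hker a).mpr ha), ?_⟩
  rw [← LinearMap.ker_eq_bot]
  apply Submodule.ker_liftQ_eq_bot
  intro a ha
  exact (hker a).mp ha

/-- Key lemma: `R/I ⊗ φ` is injective for every ideal `I`. -/
lemma aux_key
    (h : ∀ (p : Ideal R) [p.IsPrime],
      Function.Injective (LinearMap.lTensor (kappa p) φ)) (I : Ideal R) :
    Function.Injective (φ.lTensor (R ⧸ I)) := by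
  induction I using IsNoetherian.induction with
  | _ I IH =>
  by_cases hI : I = ⊤
  · subst hI
    haveI : Subsingleton (R ⧸ (⊤ : Ideal R)) :=
      ⟨fun a b => Quotient.inductionOn₂' a b fun x y =>
        (Submodule.Quotient.eq _).mpr trivial⟩
    intro x y _
    haveI : Subsingleton ((R ⧸ (⊤ : Ideal R)) ⊗[R] F₁) := by
      constructor
      intro a b
      have : ∀ z : (R ⧸ (⊤ : Ideal R)) ⊗[R] F₁, z = 0 := by
        intro z
        induction z using TensorProduct.induction_on with
        | zero => rfl
        | tmul m n => rw [Subsingleton.elim m 0, TensorProduct.zero_tmul]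
        | add u v hu hv => rw [hu, hv, add_zero]
      rw [this a, this b]
    exact Subsingleton.elim x y
  · haveI : Nontrivial (R ⧸ I) := Ideal.Quotient.nontrivial_iff.mpr hI
    obtain ⟨x, hx⟩ := exists_ne (0 : R ⧸ I)
    obtain ⟨P, hP, -⟩ := exists_le_isAssociatedPrime_of_isNoetherianRing R x hx
    obtain ⟨hPprime, y, hy⟩ := isAssociatedPrime_iff.mp hP
    have hyne : y ≠ 0 := by
      rintro rfl
      apply hPprime.ne_top
      rw [hy, Ideal.eq_top_iff_one, Submodule.mem_colon_singleton, one_smul, Submodule.mem_bot]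
    have hkg : LinearMap.ker (LinearMap.toSpanSingleton R (R ⧸ I) y) = P := by
      ext r
      rw [LinearMap.mem_ker, LinearMap.toSpanSingleton_apply, hy,
        Submodule.mem_colon_singleton, Submodule.mem_bot]
    obtain ⟨f, hf_inj, hfy, hf_exact⟩ :
        ∃ f : (R ⧸ P) →ₗ[R] R ⧸ I, Function.Injective f ∧ y ∈ LinearMap.range f ∧
          Function.Exact f (LinearMap.range f).mkQ := by
      refine ⟨Submodule.liftQ P (LinearMap.toSpanSingleton R (R ⧸ I) y)
        (le_of_eq hkg.symm), ?_, ?_, ?_⟩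
      · rw [← LinearMap.ker_eq_bot]
        exact Submodule.ker_liftQ_eq_bot _ _ _ (le_of_eq hkg)
      · exact ⟨Submodule.Quotient.mk 1, by
          rw [Submodule.liftQ_apply, LinearMap.toSpanSingleton_apply, one_smul]⟩
      · exact LinearMap.exact_map_mkQ_range _
    have hIJ : I < Submodule.comap I.mkQ (LinearMap.range f) := by
      constructor
      · intro r hr
        have h0 : I.mkQ r = 0 := (Submodule.Quotient.mk_eq_zero I).mpr hr
        show r ∈ Submodule.comap I.mkQ (LinearMap.range f)
        rw [Submodule.mem_comap, h0]
        exact (LinearMap.range f).zero_mem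
      · intro hle
        obtain ⟨a, ha⟩ := Submodule.mkQ_surjective I y
        have haJ : a ∈ Submodule.comap I.mkQ (LinearMap.range f) := by
          rw [Submodule.mem_comap, ha]; exact hfy
        have : a ∈ I := hle haJ
        apply hyne
        rw [← ha]
        exact (Submodule.Quotient.mk_eq_zero I).mpr this
    have hmapS : (Submodule.comap I.mkQ (LinearMap.range f)).map I.mkQ
        = LinearMap.range f :=
      Submodule.map_comap_eq_of_surjective (Submodule.mkQ_surjective I) _
    -- injectivity for R ⧸ P via the residue field
    have hP' : Function.Injective (φ.lTensor (R ⧸ P)) := by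
      haveI : P.IsPrime := hPprime
      obtain ⟨e, he⟩ := aux_residue P
      exact aux_mono φ e he (h P)
    -- injectivity for the quotient (R ⧸ I) ⧸ range f via IH at comap I.mkQ (range f)
    have hQ : Function.Injective (φ.lTensor ((R ⧸ I) ⧸ LinearMap.range f)) := by
      have hJinj := IH _ hIJ
      let e₁ : ((R ⧸ I) ⧸ LinearMap.range f) ≃ₗ[R]
          ((R ⧸ I) ⧸ (Submodule.comap I.mkQ (LinearMap.range f)).map I.mkQ) :=
        Submodule.quotEquivOfEq _ _ hmapS.symm
      let e₂ : ((R ⧸ I) ⧸ (Submodule.comap I.mkQ (LinearMap.range f)).map I.mkQ) ≃ₗ[R]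
          R ⧸ Submodule.comap I.mkQ (LinearMap.range f) :=
        Submodule.quotientQuotientEquivQuotient I _ hIJ.le
      exact aux_mono φ (e₂.toLinearMap.comp e₁.toLinearMap)
        (e₂.injective.comp e₁.injective) hJinj
    -- conclude by the four lemma
    exact aux_four φ f (LinearMap.range f).mkQ hf_inj hf_exact
      (Submodule.mkQ_surjective _) hP' hQ

end Key

/-- Let `R` be a noetherian commutative ring and `φ : F₁ → F₀` an
`R`-linear map between flat `R`-modules. If `κ(p) ⊗ φ` is injective for every prime
ideal `p`, then `φ` is injective and `Coker φ` is flat. -/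
theorem stmt_7 (R : Type*) [CommRing R] [IsNoetherianRing R]
    (F₁ F₀ : Type*) [AddCommGroup F₁] [Module R F₁] [AddCommGroup F₀] [Module R F₀]
    [Module.Flat R F₁] [Module.Flat R F₀] (φ : F₁ →ₗ[R] F₀)
    (h : ∀ (p : Ideal R) [p.IsPrime],
      Function.Injective (LinearMap.lTensor (kappa p) φ)) :
    Function.Injective φ ∧ Module.Flat R (F₀ ⧸ LinearMap.range φ) := by
  have key : ∀ I : Ideal R, Function.Injective (φ.lTensor (R ⧸ I)) := aux_key φ h
  -- φ is injective
  have hR : Function.Injective (φ.lTensor R) := by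
    have hbot := key ⊥
    have hmk : Function.Injective ((⊥ : Ideal R).mkQ) := by
      rw [← LinearMap.ker_eq_bot, Submodule.ker_mkQ]
    exact aux_mono φ (⊥ : Ideal R).mkQ hmk hbot
  have hφ : Function.Injective φ := by
    intro x y hxy
    have h1 : φ.lTensor R ((1 : R) ⊗ₜ x) = φ.lTensor R ((1 : R) ⊗ₜ y) := by
      simp [LinearMap.lTensor_tmul, hxy]
    have h2 := hR h1
    have := congrArg (TensorProduct.lid R F₁) h2
    simpa using this
  refine ⟨hφ, ?_⟩
  set C := F₀ ⧸ LinearMap.range φ with hC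
  set π : F₀ →ₗ[R] C := (LinearMap.range φ).mkQ with hπ
  rw [Module.Flat.iff_lTensor_injective']
  intro I
  rw [injective_iff_map_eq_zero]
  intro x hx
  obtain ⟨y, hy⟩ := LinearMap.rTensor_surjective (I : Submodule R R)
    (g := π) (Submodule.mkQ_surjective _) x
  -- β y is killed by the map to C ⊗ R
  have hβy : π.rTensor R (I.subtype.lTensor F₀ y) = 0 := by
    rw [← LinearMap.comp_apply, LinearMap.rTensor_comp_lTensor,
      ← LinearMap.lTensor_comp_rTensor, LinearMap.comp_apply, hy, hx]
  -- exactness F₁ ⊗ R → F₀ ⊗ R → C ⊗ R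
  have hexact : Function.Exact (φ.rTensor R) (π.rTensor R) :=
    rTensor_exact R (LinearMap.exact_map_mkQ_range φ) (Submodule.mkQ_surjective _)
  obtain ⟨z, hz⟩ := (hexact _).mp hβy
  -- push z to F₁ ⊗ R/I and show it vanishes
  have hexactF₀ : Function.Exact (I.subtype.lTensor F₀) (I.mkQ.lTensor F₀) :=
    lTensor_exact F₀ (LinearMap.exact_subtype_mkQ I) (Submodule.mkQ_surjective I)
  have hz0 : φ.rTensor (R ⧸ I) (I.mkQ.lTensor F₁ z) = 0 := by
    rw [← LinearMap.comp_apply, LinearMap.rTensor_comp_lTensor,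
      ← LinearMap.lTensor_comp_rTensor, LinearMap.comp_apply, hz]
    exact (hexactF₀ _).mpr ⟨y, rfl⟩
  have hkeyI : Function.Injective (φ.rTensor (R ⧸ I)) :=
    (LinearMap.lTensor_inj_iff_rTensor_inj _ _).mp (key I)
  have hz1 : I.mkQ.lTensor F₁ z = 0 := hkeyI (hz0.trans (map_zero _).symm)
  have hexactF₁ : Function.Exact (I.subtype.lTensor F₁) (I.mkQ.lTensor F₁) :=
    lTensor_exact F₁ (LinearMap.exact_subtype_mkQ I) (Submodule.mkQ_surjective I)
  obtain ⟨w, hw⟩ := (hexactF₁ _).mp hz1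
  -- β is injective, so y comes from F₁ ⊗ I
  have hβ : Function.Injective (I.subtype.lTensor F₀) :=
    Module.Flat.lTensor_preserves_injective_linearMap I.subtype (Submodule.injective_subtype I)
  have hyw : y = φ.rTensor (I : Submodule R R) w := by
    apply hβ
    rw [← LinearMap.comp_apply, LinearMap.lTensor_comp_rTensor,
      ← LinearMap.rTensor_comp_lTensor, LinearMap.comp_apply, hw, hz]
  -- conclude x = 0
  rw [← hy, hyw, ← LinearMap.comp_apply, ← LinearMap.rTensor_comp]
  have hπφ : π.comp φ = 0 := (LinearMap.exact_map_mkQ_range φ).linearMap_comp_eq_zero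
  rw [hπφ, LinearMap.rTensor_zero, LinearMap.zero_apply]
end

section
/- Let R be a noetherian commutative ring and F a flat R-module. If κ(p) ⊗_R F = 0 for every prime ideal p of R, then F = 0. -/
open TensorProduct

set_option synthInstance.maxHeartbeats 1000000
set_option maxHeartbeats 1000000

/-- Auxiliary: over a flat module, an element annihilated by a f.g. ideal `I`
lies in `(ann I) • ⊤`. -/
theorem aux_flat_mem {A : Type*} [CommRing A] {M : Type*} [AddCommGroup M] [Module A M]
    [Module.Flat A M] (I : Ideal A) (hI : I.FG) (y : M) (hy : ∀ a ∈ I, a • y = 0) :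
    y ∈ Submodule.annihilator I • (⊤ : Submodule A M) := by
  classical
  obtain ⟨s, hs⟩ := hI
  set J : Ideal A := Submodule.annihilator I with hJ
  let ψ : A →ₗ[A] (s → A) := LinearMap.pi fun i => LinearMap.toSpanSingleton A A (i : A)
  have hker : LinearMap.ker ψ = J := by
    ext a
    rw [hJ, ← hs, ← Ideal.submodule_span_eq, Submodule.mem_annihilator_span]
    constructor
    · intro h n
      exact congrFun (LinearMap.mem_ker.mp h) n
    · intro h
      rw [LinearMap.mem_ker]
      funext n
      exact h n
  have hex : Function.Exact (J.subtype) ψ := by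
    rw [LinearMap.exact_iff, hker, Submodule.range_subtype]
  have hex2 := Module.Flat.lTensor_exact M hex
  have h0 : (LinearMap.lTensor M ψ) (y ⊗ₜ (1 : A)) = 0 := by
    rw [LinearMap.lTensor_tmul]
    have hψ1 : ψ 1 = ∑ i : s, Pi.single i ((i : A)) := by
      rw [Finset.univ_sum_single]
      funext n
      simp [ψ, LinearMap.pi_apply, LinearMap.toSpanSingleton_apply]
    rw [hψ1, tmul_sum]
    refine Finset.sum_eq_zero fun i _ => ?_
    have : (Pi.single (i : s) ((i : A)) : s → A) = (i : A) • (Pi.single (i : s) (1 : A) : s → A) := by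
      funext n
      by_cases hn : n = i <;> simp [Pi.single_apply, hn]
    rw [this, tmul_smul, smul_tmul',
      hy (i : A) (hs ▸ Submodule.subset_span i.2), zero_tmul]
  obtain ⟨u, hu⟩ := (hex2 (y ⊗ₜ (1 : A))).mp h0
  have hmem : ∀ u : M ⊗[A] J,
      (TensorProduct.rid A M) ((LinearMap.lTensor M J.subtype) u) ∈
        J • (⊤ : Submodule A M) := by
    intro v
    induction v with
    | zero => simp
    | tmul m j =>
        rw [LinearMap.lTensor_tmul, Submodule.subtype_apply, TensorProduct.rid_tmul]
        exact Submodule.smul_mem_smul j.2 Submodule.mem_top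
    | add v w hv hw =>
        rw [map_add, map_add]
        exact Submodule.add_mem _ hv hw
  have := hmem u
  rw [hu, TensorProduct.rid_tmul, one_smul] at this
  exact this

/-- If `F` is a flat module over a noetherian commutative ring `R`
and `κ(p) ⊗[R] F = 0` for every prime ideal `p`, then `F = 0`. -/
theorem stmt_9 (R : Type*) [CommRing R] [IsNoetherianRing R]
    (F : Type*) [AddCommGroup F] [Module R F] [Module.Flat R F]
    (h : ∀ (p : Ideal R) [p.IsPrime], Subsingleton (kappa p ⊗[R] F)) :
    Subsingleton F := by
  by_contra hF
  rw [not_subsingleton_iff_nontrivial] at hF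
  obtain ⟨p, hpa⟩ := associatedPrimes.nonempty R F
  obtain ⟨hp, x, hx⟩ := isAssociatedPrime_iff.mp hpa
  haveI := hp
  set A := Localization.AtPrime p with hA
  set m := IsLocalRing.maximalIdeal A with hm
  -- kernel of r ↦ r • x is p
  have hker : LinearMap.ker (LinearMap.toSpanSingleton R F x) = p := by
    ext r
    rw [LinearMap.mem_ker, LinearMap.toSpanSingleton_apply, hx,
      Submodule.mem_colon_singleton, Submodule.mem_bot]
  -- injection R⧸p → F
  let ι : (R ⧸ p) →ₗ[R] F :=
    Submodule.liftQ p (LinearMap.toSpanSingleton R F x) (le_of_eq hker.symm)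
  have hι : Function.Injective ι :=
    LinearMap.ker_eq_bot.mp (Submodule.ker_liftQ_eq_bot p _ _ (le_of_eq hker))
  -- the element y = 1 ⊗ x is nonzero in A ⊗ F
  set y : A ⊗[R] F := (1 : A) ⊗ₜ[R] x with hy
  have hy1 : ((1 : A) ⊗ₜ[R] (Ideal.Quotient.mk p (1 : R)) : A ⊗[R] (R ⧸ p)) ≠ 0 := by
    intro h0
    have h1 : (tensorQuotEquivQuotSMul A p) ((1 : A) ⊗ₜ[R] (Ideal.Quotient.mk p (1 : R))) = 0 := by
      rw [h0, map_zero]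
    rw [tensorQuotEquivQuotSMul_tmul_mk, one_smul, Submodule.Quotient.mk_eq_zero,
      Ideal.smul_top_eq_map, Submodule.restrictScalars_mem,
      Localization.AtPrime.map_eq_maximalIdeal] at h1
    exact (IsLocalRing.maximalIdeal.isMaximal A).ne_top
      (Ideal.eq_top_of_unit_mem _ _ 1 h1 (mul_one 1))
  have hyne : y ≠ 0 := by
    intro h0
    apply hy1
    have hinj := Module.Flat.lTensor_preserves_injective_linearMap (M := A) ι hι
    apply hinj
    rw [map_zero, LinearMap.lTensor_tmul]
    have hι1 : ι (Ideal.Quotient.mk p (1 : R)) = x := by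
      show LinearMap.toSpanSingleton R F x 1 = x
      rw [LinearMap.toSpanSingleton_apply, one_smul]
    rw [hι1, ← hy, h0]
  -- m annihilates y
  have hmy : m ≤ LinearMap.ker (LinearMap.toSpanSingleton A (A ⊗[R] F) y) := by
    rw [hm, ← Localization.AtPrime.map_eq_maximalIdeal, Ideal.map_le_iff_le_comap]
    intro r hr
    rw [Ideal.mem_comap, LinearMap.mem_ker, LinearMap.toSpanSingleton_apply, hy]
    have hrx : r • x = 0 := by
      rw [← hker] at hr
      exact hr
    calc algebraMap R A r • ((1 : A) ⊗ₜ[R] x)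
        = ((algebraMap R A r) • (1 : A)) ⊗ₜ[R] x := by rw [smul_tmul']
      _ = (r • (1 : A)) ⊗ₜ[R] x := by rw [algebraMap_smul]
      _ = (1 : A) ⊗ₜ[R] (r • x) := smul_tmul r 1 x
      _ = 0 := by rw [hrx, tmul_zero]
  -- from the hypothesis, m • ⊤ = ⊤ on A ⊗ F
  haveI := h p
  haveI hs1 : Subsingleton ((kappa p) ⊗[A] (A ⊗[R] F)) :=
    (TensorProduct.AlgebraTensorModule.cancelBaseChange R A A (kappa p) F).toEquiv.subsingleton
  haveI hs2 : Subsingleton ((A ⧸ m) ⊗[A] (A ⊗[R] F)) := hs1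
  haveI hs3 : Subsingleton ((A ⊗[R] F) ⧸ (m • (⊤ : Submodule A (A ⊗[R] F)))) :=
    (quotTensorEquivQuotSMul (A ⊗[R] F) m).symm.toEquiv.subsingleton
  have htop : m • (⊤ : Submodule A (A ⊗[R] F)) = ⊤ :=
    Submodule.Quotient.subsingleton_iff.mp hs3
  -- m is finitely generated
  have hpfg : p.FG := (isNoetherianRing_iff_ideal_fg R).mp ‹IsNoetherianRing R› p
  have hmfg : m.FG := by
    rw [hm, ← Localization.AtPrime.map_eq_maximalIdeal]
    exact hpfg.map _
  have hmem := aux_flat_mem m hmfg y (fun a ha => hmy ha)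
  have hJm : Submodule.annihilator m • (⊤ : Submodule A (A ⊗[R] F)) = ⊥ := by
    conv_lhs => rw [← htop, ← Submodule.smul_assoc]
    have hbot : (Submodule.annihilator m • m : Submodule A A) = ⊥ := by
      rw [eq_bot_iff]
      refine Submodule.smul_le.mpr fun r hr n hn => ?_
      rw [Submodule.mem_bot]
      exact Submodule.mem_annihilator.mp hr n hn
    rw [hbot, Submodule.bot_smul]
  rw [hJm, Submodule.mem_bot] at hmem
  exact hyne hmem
end

section
/- Let R be a noetherian commutative ring and φ : F₁ → F₀ an R-linear map between flat R-modules. If for every prime ideal p of R the induced map κ(p) ⊗_R φ : κ(p) ⊗_R F₁ → κ(p) ⊗_R F₀ is bijective, then φ is bijective. -/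
open TensorProduct

section KappaMap

variable {R : Type*} [CommRing R] (p : Ideal R) [p.IsPrime]

/-- The natural `R`-linear map `R/p → κ(p)`. -/
noncomputable def kappaMap : (R ⧸ p) →ₗ[R] kappa p :=
  Submodule.liftQ p (Algebra.linearMap R (kappa p)) (by
    intro a ha
    have h1 : algebraMap R (kappa p) a =
        IsLocalRing.residue (Localization.AtPrime p)
          (algebraMap R (Localization.AtPrime p) a) := rfl
    have h2 : algebraMap R (Localization.AtPrime p) a ∈
        IsLocalRing.maximalIdeal (Localization.AtPrime p) :=
      (IsLocalization.AtPrime.to_map_mem_maximal_iff (Localization.AtPrime p) p a).mpr ha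
    simp only [LinearMap.mem_ker, Algebra.linearMap_apply, h1]
    exact (IsLocalRing.residue_eq_zero_iff _).mpr h2)

lemma kappaMap_injective : Function.Injective (kappaMap p) := by
  rw [← LinearMap.ker_eq_bot, eq_bot_iff]
  rintro x hx
  obtain ⟨a, rfl⟩ := Submodule.Quotient.mk_surjective _ x
  have hx' : algebraMap R (kappa p) a = 0 := by
    exact LinearMap.mem_ker.mp hx
  have h1 : algebraMap R (kappa p) a =
      IsLocalRing.residue (Localization.AtPrime p)
        (algebraMap R (Localization.AtPrime p) a) := rfl
  rw [h1] at hx'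
  have h2 : a ∈ p :=
    (IsLocalization.AtPrime.to_map_mem_maximal_iff (Localization.AtPrime p) p a).mp
      ((IsLocalRing.residue_eq_zero_iff _).mp hx')
  rw [Submodule.mem_bot]; exact (Submodule.Quotient.mk_eq_zero _).mpr h2

end KappaMap

open TensorProduct

universe u

/-- Dévissage: a property of (finitely generated) modules that holds for trivial modules and
all `R ⧸ p` for `p` prime, respects linear equivalences, and is closed under extensions,
holds for every finite module over a noetherian ring. -/
lemma devissage {R : Type u} [CommRing R] [IsNoetherianRing R]
    (P : ∀ (N : Type u) [AddCommGroup N] [Module R N], Prop)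
    (htriv : ∀ (N : Type u) [AddCommGroup N] [Module R N], Subsingleton N → P N)
    (hcongr : ∀ (A B : Type u) [AddCommGroup A] [Module R A] [AddCommGroup B] [Module R B],
      (A ≃ₗ[R] B) → P A → P B)
    (hprime : ∀ (p : Ideal R) [p.IsPrime], P (R ⧸ p))
    (hext : ∀ (A B C : Type u) [AddCommGroup A] [Module R A] [AddCommGroup B] [Module R B]
      [AddCommGroup C] [Module R C] (f : A →ₗ[R] B) (g : B →ₗ[R] C),
      Function.Injective f → Function.Surjective g → Function.Exact f g → P A → P C → P B)
    (N : Type u) [AddCommGroup N] [Module R N] [Module.Finite R N] : P N := by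
  have hNoeth : IsNoetherian R N := isNoetherian_of_isNoetherianRing_of_finite R N
  obtain ⟨N', hN'mem, hmax⟩ := (set_has_maximal_iff_noetherian.mpr hNoeth)
    {N' : Submodule R N | P ↥N'}
    ⟨⊥, htriv _ (Submodule.subsingleton_iff_eq_bot.mpr rfl)⟩
  by_cases htop : N' = ⊤
  · subst htop
    exact hcongr _ _ (Submodule.topEquiv) hN'mem
  · exfalso
    have hnt : Nontrivial (N ⧸ N') :=
      Submodule.Quotient.nontrivial_iff.mpr htop
    obtain ⟨q, hq⟩ := associatedPrimes.nonempty R (N ⧸ N')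
    obtain ⟨hqprime, x, hxq⟩ := isAssociatedPrime_iff.mp hq
    have hx0 : x ≠ 0 := by
      rintro rfl
      refine hqprime.ne_top (Ideal.eq_top_iff_one _ |>.mpr ?_)
      rw [hxq]
      exact Submodule.mem_colon_singleton.mpr (by simp)
    -- `q` equals the torsion ideal of `x`, hence `R ⧸ q ≃ R ∙ x`.
    have hq_tor : q = Ideal.torsionOf R (N ⧸ N') x := by
      rw [hxq]
      ext r
      rw [Submodule.mem_colon_singleton, Submodule.mem_bot, Ideal.mem_torsionOf_iff]
    have e : (R ⧸ q) ≃ₗ[R] ↥(R ∙ x) := by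
      rw [hq_tor]
      exact Ideal.quotTorsionOfEquivSpanSingleton R _ x
    set N'' : Submodule R N := Submodule.comap N'.mkQ (R ∙ x) with hN''
    have hle : N' ≤ N'' := by
      intro b hb
      simp only [hN'', Submodule.mem_comap]
      rw [Submodule.mkQ_apply, (Submodule.Quotient.mk_eq_zero N').mpr hb]
      exact Submodule.zero_mem _
    have hlt : N' < N'' := by
      refine lt_of_le_of_ne hle ?_
      intro heq
      obtain ⟨b, hb⟩ := N'.mkQ_surjective x
      have hbN'' : b ∈ N'' := by
        simp only [hN'', Submodule.mem_comap, hb]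
        exact Submodule.mem_span_singleton_self x
      rw [← heq] at hbN''
      exact hx0 (by rw [← hb]; exact (Submodule.Quotient.mk_eq_zero N').mpr hbN'')
    -- the extension `0 → N' → N'' → R ∙ x → 0`
    set f : ↥N' →ₗ[R] ↥N'' := Submodule.inclusion hle with hf
    have hmem : ∀ c : ↥N'', N'.mkQ (c : N) ∈ (R ∙ x) := fun c => c.2
    set g : ↥N'' →ₗ[R] ↥(R ∙ x) :=
      LinearMap.codRestrict (R ∙ x) (N'.mkQ ∘ₗ N''.subtype) hmem with hg
    have hgsurj : Function.Surjective g := by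
      rintro ⟨c, hc⟩
      obtain ⟨b, hb⟩ := N'.mkQ_surjective c
      refine ⟨⟨b, ?_⟩, ?_⟩
      · simp only [hN'', Submodule.mem_comap, hb]; exact hc
      · apply Subtype.ext
        exact hb
    have hexact : Function.Exact f g := by
      intro c
      constructor
      · intro hc
        have : (c : N) ∈ N' := by
          have := congrArg (Subtype.val) hc
          exact (Submodule.Quotient.mk_eq_zero N').mp this
        exact ⟨⟨(c : N), this⟩, Subtype.ext rfl⟩
      · rintro ⟨a, rfl⟩
        apply Subtype.ext
        exact (Submodule.Quotient.mk_eq_zero N').mpr a.2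
    have hPN'' : P ↥N'' :=
      hext _ _ _ f g (Submodule.inclusion_injective hle) hgsurj hexact hN'mem
        (hcongr _ _ e (hprime q))
    exact hmax N'' hPN'' hlt

section Plumbing

open LinearMap

variable {R : Type*} [CommRing R]

lemma tensor_subsingleton {N M : Type*} [AddCommGroup N] [Module R N]
    [AddCommGroup M] [Module R M] (hN : Subsingleton N) :
    Subsingleton (N ⊗[R] M) := by
  have hzero : ∀ z : N ⊗[R] M, z = 0 := by
    intro z
    induction z with
    | zero => rfl
    | tmul n m => rw [Subsingleton.elim n 0, zero_tmul]
    | add x y hx hy => rw [hx, hy, add_zero]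
  exact ⟨fun a b => by rw [hzero a, hzero b]⟩

lemma lid_naturality {M M' : Type*} [AddCommGroup M] [Module R M]
    [AddCommGroup M'] [Module R M'] (f : M →ₗ[R] M') (t : R ⊗[R] M) :
    f (TensorProduct.lid R M t) = TensorProduct.lid R M' (lTensor R f t) := by
  induction t with
  | zero => simp
  | tmul r m => simp
  | add x y hx hy => simp [map_add, hx, hy]

lemma mem_smul_top_iff_exists {M : Type*} [AddCommGroup M] [Module R M]
    (J : Ideal R) (m : M) (hm : m ∈ J • (⊤ : Submodule R M)) :
    ∃ v : (↥J) ⊗[R] M, TensorProduct.lid R M (rTensor M J.subtype v) = m := by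
  refine Submodule.smul_induction_on hm ?_ ?_
  · intro r hr n _
    exact ⟨(⟨r, hr⟩ : ↥J) ⊗ₜ n, by simp⟩
  · rintro x y ⟨v, hv⟩ ⟨w, hw⟩
    exact ⟨v + w, by simp [hv, hw]⟩

lemma smul_top_of_tensor {M : Type*} [AddCommGroup M] [Module R M]
    (J : Ideal R) (v : (↥J) ⊗[R] M) :
    TensorProduct.lid R M (rTensor M J.subtype v) ∈ J • (⊤ : Submodule R M) := by
  induction v with
  | zero => simp
  | tmul j m =>
    simp only [rTensor_tmul, Submodule.coe_subtype, lid_tmul]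
    exact Submodule.smul_mem_smul j.2 trivial
  | add x y hx hy => simpa [map_add] using Submodule.add_mem _ hx hy

/-- Extension closure for the property `N ↦ Injective (lTensor N ι)`,
where `ι` is a map into a flat module. -/
lemma ext_closure {W F₀ : Type*} [AddCommGroup W] [Module R W]
    [AddCommGroup F₀] [Module R F₀] [Module.Flat R F₀] (ι : W →ₗ[R] F₀)
    {A B C : Type*} [AddCommGroup A] [Module R A] [AddCommGroup B] [Module R B]
    [AddCommGroup C] [Module R C] (f : A →ₗ[R] B) (g : B →ₗ[R] C)
    (hf : Function.Injective f) (hg : Function.Surjective g) (hfg : Function.Exact f g)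
    (hA : Function.Injective (lTensor A ι)) (hC : Function.Injective (lTensor C ι)) :
    Function.Injective (lTensor B ι) := by
  rw [injective_iff_map_eq_zero]
  intro x hx
  have exactI : Function.Exact (rTensor W f) (rTensor W g) := rTensor_exact W hfg hg
  have h1 : lTensor C ι (rTensor W g x) = 0 := by
    rw [← LinearMap.comp_apply, lTensor_comp_rTensor, ← rTensor_comp_lTensor,
      LinearMap.comp_apply, hx, map_zero]
  have h2 : rTensor W g x = 0 := hC (by rw [h1, map_zero])
  obtain ⟨a, ha⟩ := (exactI x).mp h2
  have h3 : rTensor F₀ f (lTensor A ι a) = 0 := by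
    rw [← LinearMap.comp_apply, rTensor_comp_lTensor, ← lTensor_comp_rTensor,
      LinearMap.comp_apply, ha, hx]
  have h4 : lTensor A ι a = 0 :=
    Module.Flat.rTensor_preserves_injective_linearMap f hf (by rw [h3, map_zero])
  have h5 : a = 0 := hA (by rw [h4, map_zero])
  rw [← ha, h5, map_zero]

/-- The property `N ↦ Injective (lTensor N ι)` respects linear equivalence. -/
lemma congr_inj {W F₀ : Type*} [AddCommGroup W] [Module R W]
    [AddCommGroup F₀] [Module R F₀] (ι : W →ₗ[R] F₀)
    {A B : Type*} [AddCommGroup A] [Module R A] [AddCommGroup B] [Module R B]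
    (e : A ≃ₗ[R] B) (hA : Function.Injective (lTensor A ι)) :
    Function.Injective (lTensor B ι) := by
  rw [injective_iff_map_eq_zero]
  intro x hx
  set a : A ⊗[R] W := rTensor W (e.symm : B →ₗ[R] A) x with ha
  have hxa : x = rTensor W (e : A →ₗ[R] B) a := by
    rw [ha, ← LinearMap.comp_apply, ← rTensor_comp]
    simp only [LinearEquiv.comp_coe, LinearEquiv.symm_trans_self]
    simp [rTensor_id]
  have h3 : rTensor F₀ (e : A →ₗ[R] B) (lTensor A ι a) = 0 := by
    rw [← LinearMap.comp_apply, rTensor_comp_lTensor, ← lTensor_comp_rTensor,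
      LinearMap.comp_apply, ← hxa, hx]
  have h4 : lTensor A ι a = 0 := by
    have : Function.Injective (rTensor F₀ (e : A →ₗ[R] B)) := by
      intro u v huv
      have := congrArg (rTensor F₀ (e.symm : B →ₗ[R] A)) huv
      rwa [← LinearMap.comp_apply, ← LinearMap.comp_apply, ← rTensor_comp,
        LinearEquiv.comp_coe, LinearEquiv.self_trans_symm, LinearEquiv.refl_toLinearMap,
        rTensor_id, LinearMap.id_apply, LinearMap.id_apply] at this
    exact this (by rw [h3, map_zero])
  have h5 : a = 0 := hA (by rw [h4, map_zero])
  rw [hxa, h5, map_zero]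

end Plumbing

section Purity

open LinearMap

universe v w

/-- If `φ : F₁ → F₀` is a surjection of flat modules, then `ker φ ⊆ F₁` is a pure
submodule: tensoring the inclusion with any module `N` stays injective. -/
lemma purity {R : Type u} [CommRing R] {F₁ : Type v} {F₀ : Type w}
    [AddCommGroup F₁] [Module R F₁] [AddCommGroup F₀] [Module R F₀]
    [Module.Flat R F₁] [Module.Flat R F₀] (φ : F₁ →ₗ[R] F₀)
    (hφ : Function.Surjective φ) (N : Type u) [AddCommGroup N] [Module R N] :
    Function.Injective (lTensor N (LinearMap.ker φ).subtype) := by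
  suffices H : ∀ (N' : Type u) [AddCommGroup N'] [Module R N'] [Module.Finite R N'],
      ∀ x : N' ⊗[R] ↥(LinearMap.ker φ), lTensor N' (LinearMap.ker φ).subtype x = 0 → x = 0 by
    rw [injective_iff_map_eq_zero]
    intro x hx
    obtain ⟨s, rfl⟩ := TensorProduct.exists_finset x
    classical
    set N' : Submodule R N := Submodule.span R (↑(s.image Prod.fst) : Set N) with hN'
    set x' : ↥N' ⊗[R] ↥(LinearMap.ker φ) :=
      ∑ p ∈ s.attach, (⟨p.1.1, Submodule.subset_span (by
        simp only [Finset.coe_image, Set.mem_image, Finset.mem_coe]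
        exact ⟨p.1, p.2, rfl⟩)⟩ : ↥N') ⊗ₜ p.1.2 with hx'
    have hxx' : rTensor ↥(LinearMap.ker φ) N'.subtype x' = ∑ p ∈ s, p.1 ⊗ₜ p.2 := by
      rw [hx', map_sum, ← Finset.sum_attach s (fun p => p.1 ⊗ₜ[R] p.2)]
      simp
    have h1 : rTensor F₁ N'.subtype (lTensor ↥N' (LinearMap.ker φ).subtype x') = 0 := by
      rw [← LinearMap.comp_apply, rTensor_comp_lTensor, ← lTensor_comp_rTensor,
        LinearMap.comp_apply, hxx', hx]
    have h2 : lTensor ↥N' (LinearMap.ker φ).subtype x' = 0 :=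
      Module.Flat.rTensor_preserves_injective_linearMap N'.subtype
        (Submodule.injective_subtype N') (by rw [h1, map_zero])
    rw [← hxx', H ↥N' x' h2, map_zero]
  intro N' _ _ _ x hx
  obtain ⟨n, π, hπ⟩ := Module.Finite.exists_fin' R N'
  obtain ⟨y, rfl⟩ := rTensor_surjective ↥(LinearMap.ker φ) hπ x
  set Y := LinearMap.ker π with hY
  have hexact : Function.Exact (rTensor F₁ Y.subtype) (rTensor F₁ π) :=
    rTensor_exact F₁ (LinearMap.exact_subtype_ker_map π) hπ
  have h1 : rTensor F₁ π (lTensor (Fin n → R) (LinearMap.ker φ).subtype y) = 0 := by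
    rw [← LinearMap.comp_apply, rTensor_comp_lTensor, ← lTensor_comp_rTensor,
      LinearMap.comp_apply, hx]
  obtain ⟨v, hv⟩ := (hexact _).mp h1
  have h2 : rTensor F₀ Y.subtype (lTensor ↥Y φ v) = 0 := by
    have hcomm : rTensor F₀ Y.subtype ∘ₗ lTensor ↥Y φ
        = lTensor (Fin n → R) φ ∘ₗ rTensor F₁ Y.subtype := by
      rw [rTensor_comp_lTensor, lTensor_comp_rTensor]
    have hzero : φ ∘ₗ (LinearMap.ker φ).subtype = 0 := by
      ext ⟨a, ha⟩; exact ha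
    calc rTensor F₀ Y.subtype (lTensor ↥Y φ v)
        = lTensor (Fin n → R) φ (rTensor F₁ Y.subtype v) := by
          rw [← LinearMap.comp_apply, hcomm, LinearMap.comp_apply]
      _ = lTensor (Fin n → R) φ (lTensor (Fin n → R) (LinearMap.ker φ).subtype y) := by rw [hv]
      _ = 0 := by rw [← LinearMap.comp_apply, ← lTensor_comp, hzero, lTensor_zero,
            LinearMap.zero_apply]
  have h3 : lTensor ↥Y φ v = 0 :=
    Module.Flat.rTensor_preserves_injective_linearMap Y.subtype
      (Submodule.injective_subtype Y) (by rw [h2, map_zero])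
  have hexact2 : Function.Exact (lTensor ↥Y (LinearMap.ker φ).subtype) (lTensor ↥Y φ) :=
    lTensor_exact ↥Y (LinearMap.exact_subtype_ker_map φ) hφ
  obtain ⟨u, hu⟩ := (hexact2 v).mp h3
  have h4 : lTensor (Fin n → R) (LinearMap.ker φ).subtype
      (rTensor ↥(LinearMap.ker φ) Y.subtype u)
      = lTensor (Fin n → R) (LinearMap.ker φ).subtype y := by
    rw [← LinearMap.comp_apply, lTensor_comp_rTensor, ← rTensor_comp_lTensor,
      LinearMap.comp_apply, hu, hv]
  have h5 : rTensor ↥(LinearMap.ker φ) Y.subtype u = y :=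
    Module.Flat.lTensor_preserves_injective_linearMap (M := Fin n → R)
      (LinearMap.ker φ).subtype (Submodule.injective_subtype _) h4
  have h6 : π ∘ₗ Y.subtype = 0 := by
    ext ⟨a, ha⟩; exact ha
  rw [← h5, ← LinearMap.comp_apply, ← rTensor_comp, h6, rTensor_zero, LinearMap.zero_apply]

end Purity

section FlatSubsingleton

open LinearMap

/-- A flat module over a noetherian ring whose fibers `κ(p) ⊗ M` all vanish is zero. -/
lemma flat_subsingleton {R : Type u} [CommRing R] [IsNoetherianRing R]
    (M : Type*) [AddCommGroup M] [Module R M] [Module.Flat R M]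
    (h : ∀ (p : Ideal R) [p.IsPrime], Subsingleton ((kappa p) ⊗[R] M)) :
    Subsingleton M := by
  have hall : ∀ (N : Type u) [AddCommGroup N] [Module R N] [Module.Finite R N],
      Subsingleton (N ⊗[R] M) := by
    intro N _ _ _
    refine devissage (R := R) (fun N _ _ => Subsingleton (N ⊗[R] M)) ?_ ?_ ?_ ?_ N
    · intro N _ _ hN
      exact tensor_subsingleton hN
    · intro A B _ _ _ _ e hA
      exact (TensorProduct.congr e (LinearEquiv.refl R M)).symm.toEquiv.subsingleton
    · intro p hp
      have hinj : Function.Injective (rTensor M (kappaMap p)) :=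
        Module.Flat.rTensor_preserves_injective_linearMap _ (kappaMap_injective p)
      exact ⟨fun a b => hinj (Subsingleton.elim _ _)⟩
    · intro A B C _ _ _ _ _ _ f g _ hg hfg hA hC
      have hex : Function.Exact (rTensor M f) (rTensor M g) := rTensor_exact M hfg hg
      have : ∀ x : B ⊗[R] M, x = 0 := by
        intro x
        have h1 : rTensor M g x = 0 := Subsingleton.elim _ _
        obtain ⟨a, ha⟩ := (hex x).mp h1
        rw [← ha, Subsingleton.elim a 0, map_zero]
      exact ⟨fun a b => by rw [this a, this b]⟩
  have : Subsingleton (R ⊗[R] M) := hall R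
  exact (TensorProduct.lid R M).symm.toEquiv.subsingleton

end FlatSubsingleton

open LinearMap

set_option maxHeartbeats 1000000

/-- Let `R` be a noetherian commutative ring and `φ : F₁ → F₀` an
`R`-linear map between flat `R`-modules. If `κ(p) ⊗ φ` is bijective for every prime
ideal `p`, then `φ` is bijective. -/
theorem stmt_10 (R : Type*) [CommRing R] [IsNoetherianRing R]
    (F₁ F₀ : Type*) [AddCommGroup F₁] [Module R F₁] [AddCommGroup F₀] [Module R F₀]
    [Module.Flat R F₁] [Module.Flat R F₀] (φ : F₁ →ₗ[R] F₀)
    (h : ∀ (p : Ideal R) [p.IsPrime],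
      Function.Bijective (LinearMap.lTensor (kappa p) φ)) :
    Function.Bijective φ := by
  classical
  -- Step 1: `(R ⧸ p) ⊗ φ` is injective for every prime `p`.
  have key1 : ∀ (p : Ideal R) [p.IsPrime], Function.Injective (lTensor (R ⧸ p) φ) := by
    intro p _
    have hinj1 : Function.Injective (rTensor F₁ (kappaMap p)) :=
      Module.Flat.rTensor_preserves_injective_linearMap _ (kappaMap_injective p)
    intro x y hxy
    apply hinj1
    apply (h p).1
    have := congrArg (rTensor F₀ (kappaMap p)) hxy
    rwa [← LinearMap.comp_apply, ← LinearMap.comp_apply (rTensor F₀ (kappaMap p)),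
      rTensor_comp_lTensor, ← lTensor_comp_rTensor,
      LinearMap.comp_apply, LinearMap.comp_apply] at this
  -- Step 2: `(R ⧸ p) ⊗ (range φ → F₀)` is injective for every prime `p`.
  have hPprime : ∀ (p : Ideal R) [p.IsPrime],
      Function.Injective (lTensor (R ⧸ p) (range φ).subtype) := by
    intro p _
    have hsur : Function.Surjective (lTensor (R ⧸ p) φ.rangeRestrict) :=
      lTensor_surjective _ φ.surjective_rangeRestrict
    intro a b hab
    obtain ⟨a', rfl⟩ := hsur a
    obtain ⟨b', rfl⟩ := hsur b
    have hcomp : lTensor (R ⧸ p) (range φ).subtype ∘ₗ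
        lTensor (R ⧸ p) φ.rangeRestrict = lTensor (R ⧸ p) φ := by
      rw [← lTensor_comp]
      congr 1
    rw [← LinearMap.comp_apply, ← LinearMap.comp_apply, hcomp] at hab
    rw [key1 p hab]
  -- Step 3: the cokernel of `φ` is flat.
  have hCflat : Module.Flat R (F₀ ⧸ range φ) := by
    rw [Module.Flat.iff_rTensor_injective']
    intro J
    have hPJ : Function.Injective (lTensor (R ⧸ (J : Ideal R)) (range φ).subtype) := by
      refine devissage (R := R)
        (fun N _ _ => Function.Injective (lTensor N (range φ).subtype)) ?_ ?_ ?_ ?_ (R ⧸ J)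
      · intro N _ _ hN
        haveI := tensor_subsingleton (M := ↥(range φ)) (R := R) hN
        intro a b _
        exact Subsingleton.elim a b
      · intro A B _ _ _ _ e hA
        exact congr_inj _ e hA
      · intro p hp
        exact hPprime p
      · intro A B C _ _ _ _ _ _ f g hf hg hfg hA hC
        exact ext_closure _ f g hf hg hfg hA hC
    rw [injective_iff_map_eq_zero]
    intro z hz
    obtain ⟨y, rfl⟩ := lTensor_surjective (↥J) (Submodule.mkQ_surjective (range φ)) z
    set w : F₀ := TensorProduct.lid R F₀ (rTensor F₀ J.subtype y) with hw
    have hwmk : (range φ).mkQ w = 0 := by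
      rw [hw, lid_naturality]
      have hc : lTensor R (range φ).mkQ (rTensor F₀ J.subtype y)
          = rTensor _ J.subtype (lTensor (↥J) (range φ).mkQ y) := by
        rw [← LinearMap.comp_apply, ← LinearMap.comp_apply,
          rTensor_comp_lTensor, lTensor_comp_rTensor]
      rw [hc, hz, map_zero]
    have hwI : w ∈ range φ := by
      rw [← Submodule.ker_mkQ (range φ)]
      exact hwmk
    have hwJ : w ∈ J • (⊤ : Submodule R F₀) := smul_top_of_tensor J y
    set u : ↥(range φ) := ⟨w, hwI⟩ with hu
    have h1 : ((1 : R ⧸ J) ⊗ₜ[R] u : (R ⧸ J) ⊗[R] ↥(range φ)) = 0 := by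
      apply hPJ
      rw [map_zero]
      have himg : lTensor (R ⧸ J) (range φ).subtype ((1 : R ⧸ J) ⊗ₜ[R] u)
          = (1 : R ⧸ J) ⊗ₜ[R] w := rfl
      rw [himg]
      refine (LinearEquiv.map_eq_zero_iff (quotTensorEquivQuotSMul F₀ J)).mp ?_
      rw [show (1 : R ⧸ J) = Ideal.Quotient.mk J 1 from rfl,
        quotTensorEquivQuotSMul_mk_tmul, one_smul]
      exact (Submodule.Quotient.mk_eq_zero _).mpr hwJ
    have h2 : u ∈ J • (⊤ : Submodule R ↥(range φ)) := by
      have h1' := (LinearEquiv.map_eq_zero_iff (quotTensorEquivQuotSMul ↥(range φ) J)).mpr h1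
      rw [show (1 : R ⧸ J) = Ideal.Quotient.mk J 1 from rfl,
        quotTensorEquivQuotSMul_mk_tmul, one_smul] at h1'
      exact (Submodule.Quotient.mk_eq_zero _).mp h1'
    obtain ⟨v, hv⟩ := mem_smul_top_iff_exists J u h2
    have h3 : rTensor F₀ J.subtype (lTensor (↥J) (range φ).subtype v)
        = rTensor F₀ J.subtype y := by
      apply (TensorProduct.lid R F₀).injective
      have hc : rTensor F₀ J.subtype ∘ₗ lTensor (↥J) (range φ).subtype
          = lTensor R (range φ).subtype ∘ₗ rTensor ↥(range φ) J.subtype := by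
        rw [rTensor_comp_lTensor, lTensor_comp_rTensor]
      rw [← LinearMap.comp_apply, hc, LinearMap.comp_apply, ← lid_naturality, hv, ← hw]
      rfl
    have h4 : lTensor (↥J) (range φ).subtype v = y :=
      (Module.Flat.iff_rTensor_injective' (R := R) (M := F₀)).mp inferInstance J h3
    have hzero : (range φ).mkQ ∘ₗ (range φ).subtype = 0 := by
      ext ⟨a, ha⟩
      simpa using (Submodule.Quotient.mk_eq_zero _).mpr ha
    rw [← h4, ← LinearMap.comp_apply, ← lTensor_comp, hzero, lTensor_zero,
      LinearMap.zero_apply]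
  -- Step 4: the fibers of the cokernel vanish.
  have hCsub : ∀ (p : Ideal R) [p.IsPrime],
      Subsingleton ((kappa p) ⊗[R] (F₀ ⧸ range φ)) := by
    intro p _
    have hsurj : Function.Surjective (lTensor (kappa p) (range φ).mkQ) :=
      lTensor_surjective _ (Submodule.mkQ_surjective _)
    have hzero : ∀ t : (kappa p) ⊗[R] F₀, lTensor (kappa p) (range φ).mkQ t = 0 := by
      intro t
      obtain ⟨t', rfl⟩ := (h p).2 t
      rw [← LinearMap.comp_apply, ← lTensor_comp]
      have hc : (range φ).mkQ ∘ₗ φ = 0 := by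
        ext a
        simpa using (Submodule.Quotient.mk_eq_zero _).mpr (LinearMap.mem_range_self φ a)
      rw [hc, lTensor_zero, LinearMap.zero_apply]
    have hall : ∀ z : (kappa p) ⊗[R] (F₀ ⧸ range φ), z = 0 := by
      intro z
      obtain ⟨t, rfl⟩ := hsurj z
      exact hzero t
    exact ⟨fun a b => by rw [hall a, hall b]⟩
  -- Step 5: surjectivity.
  haveI := hCflat
  have hCtriv : Subsingleton (F₀ ⧸ range φ) := flat_subsingleton _ hCsub
  have hsurφ : Function.Surjective φ := by
    rw [← LinearMap.range_eq_top]
    exact Submodule.Quotient.subsingleton_iff.mp hCtriv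
  -- Step 6: the kernel of `φ` is flat.
  have hKflat : Module.Flat R ↥(ker φ) := by
    rw [Module.Flat.iff_rTensor_injective']
    intro J
    rw [injective_iff_map_eq_zero]
    intro z hz
    have h1 : rTensor F₁ J.subtype (lTensor (↥J) (ker φ).subtype z) = 0 := by
      rw [← LinearMap.comp_apply, rTensor_comp_lTensor, ← lTensor_comp_rTensor,
        LinearMap.comp_apply, hz, map_zero]
    have h2 : lTensor (↥J) (ker φ).subtype z = 0 :=
      (Module.Flat.iff_rTensor_injective' (R := R) (M := F₁)).mp inferInstance J h1
    exact (injective_iff_map_eq_zero _).mp (purity φ hsurφ (↥J)) z h2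
  -- Step 7: the fibers of the kernel vanish.
  have hKsub : ∀ (p : Ideal R) [p.IsPrime],
      Subsingleton ((kappa p) ⊗[R] ↥(ker φ)) := by
    intro p _
    have hinj := purity φ hsurφ (kappa p)
    have hzero : ∀ z : (kappa p) ⊗[R] ↥(ker φ), z = 0 := by
      intro z
      apply (injective_iff_map_eq_zero _).mp hinj
      apply (h p).1
      rw [map_zero, ← LinearMap.comp_apply, ← lTensor_comp]
      have hc : φ ∘ₗ (ker φ).subtype = 0 := by
        ext ⟨a, ha⟩
        exact ha
      rw [hc, lTensor_zero, LinearMap.zero_apply]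
    exact ⟨fun a b => by rw [hzero a, hzero b]⟩
  haveI := hKflat
  have hKtriv : Subsingleton ↥(ker φ) := flat_subsingleton _ hKsub
  have hinjφ : Function.Injective φ := by
    rw [← LinearMap.ker_eq_bot]
    exact Submodule.subsingleton_iff_eq_bot.mp hKtriv
  exact ⟨hinjφ, hsurφ⟩
end
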